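/- arXiv:2007.10218 — 2 statements merged into one kernel-verified Lean document; each statement's English description precedes it below -/
import Mathlib

section
/- Define K₂(t,ρ) = ∫_ρ^∞ e^{(3/4)t} K₃(t,s) sinh(s) (cosh s - cosh ρ)^{-1/2} ds for t > 0 and ρ > 0, where K₃(t,s) = (4πt)^{-3/2} (s/sinh s) e^{-t - s²/(4t)}. Then for every t > 0 and every ρ > 0, the derivative in ρ of K₂ is given by differentiation under the integral sign: ∂_ρ K₂(t,ρ) = ∫_ρ^∞ e^{(3/4)t} (∂_s K₃)(t,s) sinh(ρ) (cosh s - cosh ρ)^{-1/2} ds. -/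
open Real MeasureTheory

/-- The heat kernel of 3-dimensional hyperbolic space. -/
noncomputable def K₃ (t s : ℝ) : ℝ :=
  (4 * π * t) ^ (-(3 : ℝ) / 2) * (s / Real.sinh s) * Real.exp (-t - s ^ 2 / (4 * t))

/-- The heat kernel of 2-dimensional hyperbolic space, defined from `K₃` via the
Davies–Mandouvalos integral recurrence. -/
noncomputable def K₂ (t ρ : ℝ) : ℝ :=
  ∫ s in Set.Ioi ρ,
    Real.exp ((3 / 4) * t) * K₃ t s * Real.sinh s *
      (Real.cosh s - Real.cosh ρ) ^ (-(1 : ℝ) / 2)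

section Aux
noncomputable def acosh (c : ℝ) : ℝ := Real.arsinh (Real.sqrt (c^2 - 1))

lemma acosh_nonneg (c : ℝ) : 0 ≤ acosh c :=
  Real.arsinh_nonneg_iff.mpr (Real.sqrt_nonneg _)

lemma sinh_acosh (c : ℝ) : Real.sinh (acosh c) = Real.sqrt (c^2 - 1) :=
  Real.sinh_arsinh _

lemma cosh_acosh {c : ℝ} (hc : 1 ≤ c) : Real.cosh (acosh c) = c := by
  rw [acosh, Real.cosh_arsinh, Real.sq_sqrt (by nlinarith)]
  rw [show 1 + (c^2 - 1) = c^2 by ring, Real.sqrt_sq (by linarith)]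

/-- if cosh a = cosh b, a,b ≥ 0 then a = b -/
lemma cosh_injOn : Set.InjOn Real.cosh (Set.Ici 0) := Real.cosh_strictMonoOn.injOn

lemma acosh_cosh {r : ℝ} (hr : 0 ≤ r) : acosh (Real.cosh r) = r := by
  have h1 : (1:ℝ) ≤ Real.cosh r := Real.one_le_cosh r
  exact _root_.cosh_injOn (acosh_nonneg _) hr (cosh_acosh h1)

lemma acosh_le_acosh {a b : ℝ} (ha : 1 ≤ a) (hab : a ≤ b) : acosh a ≤ acosh b := by
  have := Real.cosh_strictMonoOn.le_iff_le (a := acosh a) (b := acosh b)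
    (acosh_nonneg _) (acosh_nonneg _)
  rw [← this, cosh_acosh ha, cosh_acosh (ha.trans hab)]
  exact hab


lemma log_le_acosh {c : ℝ} (hc : 1 ≤ c) : Real.log c ≤ acosh c := by
  rw [acosh, Real.arsinh]
  have h1 : (0:ℝ) ≤ c^2 - 1 := by nlinarith
  apply Real.log_le_log (by linarith)
  have : Real.sqrt (1 + Real.sqrt (c^2-1)^2) = c := by
    rw [Real.sq_sqrt h1, show 1 + (c^2-1) = c^2 by ring, Real.sqrt_sq (by linarith)]
  rw [this]
  have := Real.sqrt_nonneg (c^2-1)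
  linarith

lemma continuous_acosh : Continuous acosh :=
  Real.continuous_arsinh.comp (Real.continuous_sqrt.comp (by continuity))

lemma hasDerivAt_acosh {c : ℝ} (hc : 1 < c) :
    HasDerivAt acosh (Real.sqrt (c^2 - 1))⁻¹ c := by
  have h1 : (0:ℝ) < c^2 - 1 := by nlinarith
  have hs0 : Real.sqrt (c^2-1) ≠ 0 := by positivity
  have hsq : HasDerivAt (fun x : ℝ => Real.sqrt (x^2 - 1)) (c / Real.sqrt (c^2-1)) c := by
    have := (Real.hasDerivAt_sqrt h1.ne').comp c (((hasDerivAt_pow 2 c).sub_const 1))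
    refine this.congr_deriv ?_
    field_simp
    ring
  have := (Real.hasDerivAt_arsinh _).comp c hsq
  refine this.congr_deriv ?_
  rw [Real.sq_sqrt h1.le, show 1 + (c^2-1) = c^2 by ring, Real.sqrt_sq (by linarith)]
  field_simp


noncomputable def K₃' (t s : ℝ) : ℝ :=
  (4 * π * t) ^ (-(3:ℝ)/2) * Real.exp (-t - s^2/(4*t)) *
    ((Real.sinh s - s * Real.cosh s)/(Real.sinh s)^2 - s^2/(2*t*Real.sinh s))

lemma sq_exp_le {t s : ℝ} (ht : 0 < t) : s^2 * Real.exp (-s^2/(8*t)) ≤ 8*t := by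
  have h := Real.add_one_le_exp (s^2/(8*t))
  have h2 : Real.exp (-s^2/(8*t)) = (Real.exp (s^2/(8*t)))⁻¹ := by
    rw [← Real.exp_neg]; ring_nf
  have h3 := Real.exp_pos (s^2/(8*t))
  rw [h2, mul_inv_le_iff₀ h3]
  have h5 : 8*t*(s^2/(8*t)) = s^2 := by field_simp
  nlinarith [mul_le_mul_of_nonneg_left h (by linarith : (0:ℝ) ≤ 8*t)]

lemma exp_sq_anti {a b d : ℝ} (hd : 0 < d) (ha : 0 ≤ a) (hab : a ≤ b) :
    Real.exp (-b^2/d) ≤ Real.exp (-a^2/d) := by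
  apply Real.exp_le_exp.2
  rw [div_le_div_iff₀ hd hd]
  nlinarith [mul_le_mul_of_nonneg_right (show a^2 ≤ b^2 by nlinarith) hd.le]

lemma cosh_lower {r s : ℝ} (hr : 0 ≤ r) (hrs : r ≤ s) :
    Real.sinh r * (s - r) ≤ Real.cosh s - Real.cosh r := by
  have key : MonotoneOn (fun x => Real.cosh x - Real.sinh r * x) (Set.Ici r) := by
    apply monotoneOn_of_deriv_nonneg (convex_Ici r)
    · fun_prop
    · intro x hx
      exact ((Real.hasDerivAt_cosh x).sub
        ((hasDerivAt_id x).const_mul _)).differentiableAt.differentiableWithinAt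
    · intro x hx
      rw [interior_Ici] at hx
      have hd : deriv (fun x => Real.cosh x - Real.sinh r * x) x
          = Real.sinh x - Real.sinh r := by
        have := ((Real.hasDerivAt_cosh x).sub ((hasDerivAt_id x).const_mul (Real.sinh r)))
        simpa [mul_comm] using this.deriv
      rw [hd, sub_nonneg]
      exact Real.sinh_le_sinh.2 (le_of_lt hx)
  have := key (Set.mem_Ici.2 le_rfl) (Set.mem_Ici.2 hrs) hrs
  simp only at this
  nlinarith

lemma rpow_neg_half_le {a b : ℝ} (ha : 0 < a) (hab : a ≤ b) :
    b ^ (-(1:ℝ)/2) ≤ a ^ (-(1:ℝ)/2) := by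
  have hb : 0 < b := lt_of_lt_of_le ha hab
  rw [show (-(1:ℝ)/2) = -(1/2) by norm_num, Real.rpow_neg ha.le, Real.rpow_neg hb.le]
  exact inv_anti₀ (Real.rpow_pos_of_pos ha _)
    (Real.rpow_le_rpow ha.le hab (by norm_num))

lemma K₃'_bound {t c s : ℝ} (ht : 0 < t) (hc : 0 < c) (hcs : c ≤ s) :
    |K₃' t s| ≤ (4*π*t) ^ (-(3:ℝ)/2) * Real.exp (-t) * (1 + 6/Real.sinh c)
      * Real.exp (-s^2/(8*t)) := by
  have hs : 0 < s := lt_of_lt_of_le hc hcs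
  have hσc : 0 < Real.sinh c := Real.sinh_pos_iff.2 hc
  have hσs : 0 < Real.sinh s := Real.sinh_pos_iff.2 hs
  have hσ : Real.sinh c ≤ Real.sinh s := Real.sinh_le_sinh.2 hcs
  have hA : (0:ℝ) < (4*π*t) ^ (-(3:ℝ)/2) := by
    have h4 : (0:ℝ) < 4*π*t := by positivity
    positivity
  have hss : s ≤ Real.sinh s := (Real.self_lt_sinh_iff.mpr hs).le
  have hch0 : (0:ℝ) < Real.cosh s := Real.cosh_pos s
  have hch : Real.cosh s ≤ 1 + Real.sinh s := by
    nlinarith [Real.sinh_sq s, Real.cosh_pos s]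
  have hinner : |(Real.sinh s - s * Real.cosh s)/(Real.sinh s)^2 - s^2/(2*t*Real.sinh s)|
      ≤ (1 + 2/Real.sinh c) + s^2/(2*t*Real.sinh c) := by
    have t1 : Real.sinh s ≤ Real.sinh s^2 / Real.sinh c := by
      rw [le_div_iff₀ hσc]; nlinarith
    have t2 : s * Real.cosh s ≤ Real.sinh s + Real.sinh s^2 := by
      nlinarith [mul_le_mul hss hch hch0.le hσs.le]
    have hX : |(Real.sinh s - s * Real.cosh s)/(Real.sinh s)^2| ≤ 1 + 2/Real.sinh c := by
      rw [abs_div, abs_of_nonneg (sq_nonneg (Real.sinh s)),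
        div_le_iff₀ (pow_pos hσs 2)]
      have habs : |Real.sinh s - s * Real.cosh s| ≤ Real.sinh s + s * Real.cosh s := by
        have := abs_sub (Real.sinh s) (s * Real.cosh s)
        rwa [abs_of_nonneg hσs.le, abs_of_nonneg (mul_nonneg hs.le hch0.le)] at this
      have hgoal : Real.sinh s + s * Real.cosh s ≤ (1 + 2/Real.sinh c) * Real.sinh s^2 := by
        have hrw : (1 + 2/Real.sinh c) * Real.sinh s^2
            = Real.sinh s^2 + 2*(Real.sinh s^2/Real.sinh c) := by ring
        rw [hrw]; linarith
      linarith
    have hY : s^2/(2*t*Real.sinh s) ≤ s^2/(2*t*Real.sinh c) := by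
      apply div_le_div_of_nonneg_left (sq_nonneg s) (by nlinarith)
      nlinarith
    calc |(Real.sinh s - s * Real.cosh s)/(Real.sinh s)^2 - s^2/(2*t*Real.sinh s)|
        ≤ |(Real.sinh s - s * Real.cosh s)/(Real.sinh s)^2| + |s^2/(2*t*Real.sinh s)| :=
          abs_sub _ _
      _ ≤ (1 + 2/Real.sinh c) + s^2/(2*t*Real.sinh c) := by
          rw [abs_of_nonneg (div_nonneg (sq_nonneg s) (by nlinarith))]
          exact add_le_add hX hY
  set E8 := Real.exp (-s^2/(8*t)) with hE8def
  have hE8pos : 0 < E8 := Real.exp_pos _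
  have e1 : E8 ≤ 1 := by
    rw [hE8def]
    apply Real.exp_le_one_iff.2
    have : (0:ℝ) ≤ s^2/(8*t) := by positivity
    linarith [neg_div (8*t) (s^2)]
  have e2 : s^2 * E8 ≤ 8*t := sq_exp_le ht
  have hE : Real.exp (-t - s^2/(4*t)) = Real.exp (-t) * (E8 * E8) := by
    rw [hE8def, ← Real.exp_add, ← Real.exp_add]; ring_nf
  have key : E8 * ((1 + 2/Real.sinh c) + s^2/(2*t*Real.sinh c)) ≤ 1 + 6/Real.sinh c := by
    have k1 : E8 * (1 + 2/Real.sinh c) ≤ 1 + 2/Real.sinh c := by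
      nlinarith [div_nonneg (by norm_num : (0:ℝ) ≤ 2) hσc.le]
    have k2 : E8 * (s^2/(2*t*Real.sinh c)) ≤ 4/Real.sinh c := by
      rw [show E8 * (s^2/(2*t*Real.sinh c)) = (s^2*E8)/(2*t*Real.sinh c) by ring]
      rw [div_le_div_iff₀ (by nlinarith) hσc]
      nlinarith [mul_le_mul_of_nonneg_right e2 hσc.le]
    have k3 : (1:ℝ) + 6/Real.sinh c = (1 + 2/Real.sinh c) + 4/Real.sinh c := by ring
    rw [k3, mul_add]
    exact add_le_add k1 k2
  calc |K₃' t s| = (4*π*t) ^ (-(3:ℝ)/2) * Real.exp (-t - s^2/(4*t))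
        * |(Real.sinh s - s * Real.cosh s)/(Real.sinh s)^2 - s^2/(2*t*Real.sinh s)| := by
        rw [K₃', abs_mul, abs_mul, abs_of_nonneg hA.le, abs_of_nonneg (Real.exp_pos _).le]
    _ ≤ (4*π*t) ^ (-(3:ℝ)/2) * Real.exp (-t - s^2/(4*t))
        * ((1 + 2/Real.sinh c) + s^2/(2*t*Real.sinh c)) := by
        exact mul_le_mul_of_nonneg_left hinner
          (mul_nonneg hA.le (Real.exp_pos _).le)
    _ = (4*π*t) ^ (-(3:ℝ)/2) * Real.exp (-t) * E8
        * (E8 * ((1 + 2/Real.sinh c) + s^2/(2*t*Real.sinh c))) := by rw [hE]; ring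
    _ ≤ (4*π*t) ^ (-(3:ℝ)/2) * Real.exp (-t) * E8 * (1 + 6/Real.sinh c) := by
        exact mul_le_mul_of_nonneg_left key
          (mul_nonneg (mul_nonneg hA.le (Real.exp_pos _).le) hE8pos.le)
    _ = (4*π*t) ^ (-(3:ℝ)/2) * Real.exp (-t) * (1 + 6/Real.sinh c) * E8 := by ring

lemma K₃_nonneg {t s : ℝ} (ht : 0 < t) (hs : 0 ≤ s) : 0 ≤ K₃ t s := by
  rcases eq_or_lt_of_le hs with h | h
  · simp [K₃, ← h]
  · have h4 : (0:ℝ) < 4*π*t := by positivity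
    have hσ := Real.sinh_pos_iff.2 h
    have hA : (0:ℝ) ≤ (4*π*t) ^ (-(3:ℝ)/2) := (Real.rpow_pos_of_pos h4 _).le
    rw [K₃]
    exact mul_nonneg (mul_nonneg hA (div_nonneg hs (le_of_lt hσ))) (Real.exp_pos _).le

lemma K₃_le {t s : ℝ} (ht : 0 < t) (hs : 0 ≤ s) :
    K₃ t s ≤ (4*π*t) ^ (-(3:ℝ)/2) * Real.exp (-t) * Real.exp (-s^2/(4*t)) := by
  have h4 : (0:ℝ) < 4*π*t := by positivity
  have hA : (0:ℝ) < (4*π*t) ^ (-(3:ℝ)/2) := by positivity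
  have hr : s / Real.sinh s ≤ 1 := by
    rcases eq_or_lt_of_le hs with h | h
    · simp [← h]
    · rw [div_le_one (Real.sinh_pos_iff.2 h)]
      exact (Real.self_lt_sinh_iff.mpr h).le
  have hrn : 0 ≤ s / Real.sinh s := by
    rcases eq_or_lt_of_le hs with h | h
    · simp [← h]
    · exact div_nonneg hs (Real.sinh_pos_iff.2 h).le
  have hE : Real.exp (-t - s^2/(4*t)) = Real.exp (-t) * Real.exp (-s^2/(4*t)) := by
    rw [← Real.exp_add]; ring_nf
  rw [K₃, hE]
  have h := mul_le_mul_of_nonneg_right (mul_le_mul_of_nonneg_left hr hA.le)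
    (mul_pos (Real.exp_pos (-t)) (Real.exp_pos (-s^2/(4*t)))).le
  nlinarith [h]



lemma hasDerivAt_K₃ {t s : ℝ} (ht : 0 < t) (hs : 0 < s) :
    HasDerivAt (fun u => K₃ t u) (K₃' t s) s := by
  have hsh : Real.sinh s ≠ 0 := (Real.sinh_pos_iff.2 hs).ne'
  have h1 : HasDerivAt (fun u : ℝ => u / Real.sinh u)
      ((1 * Real.sinh s - s * Real.cosh s)/(Real.sinh s)^2) s :=
    (hasDerivAt_id s).div (Real.hasDerivAt_sinh s) hsh
  have h2 : HasDerivAt (fun u : ℝ => -t - u^2/(4*t))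
      (-((2:ℕ) * s^1 / (4*t))) s := ((hasDerivAt_pow 2 s).div_const (4*t)).const_sub (-t)
  have h3 := h2.exp
  have h4 := (h1.const_mul ((4 * π * t) ^ (-(3:ℝ)/2))).mul h3
  refine h4.congr_deriv ?_
  rw [K₃']
  field_simp
  ring

lemma deriv_K₃ {t s : ℝ} (ht : 0 < t) (hs : 0 < s) :
    deriv (fun u => K₃ t u) s = K₃' t s := (hasDerivAt_K₃ ht hs).deriv

lemma continuousOn_K₃ {t : ℝ} : ContinuousOn (fun s => K₃ t s) (Set.Ioi 0) := by
  apply ContinuousOn.mul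
  · exact (continuousOn_const.mul (continuousOn_id.div Real.continuous_sinh.continuousOn
      (fun x hx => (Real.sinh_pos_iff.2 hx).ne')))
  · fun_prop

lemma continuousOn_K₃' {t : ℝ} (ht : 0 < t) : ContinuousOn (fun s => K₃' t s) (Set.Ioi 0) := by
  apply ContinuousOn.mul
  · fun_prop
  · apply ContinuousOn.sub
    · exact ((Real.continuous_sinh.continuousOn.sub
        (continuousOn_id.mul Real.continuous_cosh.continuousOn)).div
        (Real.continuous_sinh.continuousOn.pow 2)
        (fun x hx => pow_ne_zero _ (Real.sinh_pos_iff.2 hx).ne'))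
    · exact (continuousOn_id.pow 2).div (by fun_prop)
        (fun x hx => by have := Real.sinh_pos_iff.2 hx; positivity)

/-- integrability of the log-squared Gaussian-type dominating function -/
lemma integrable_exp_log_sq {a : ℝ} (ha : 0 < a) :
    IntegrableOn (fun x => Real.exp (-(Real.log (1+x^2))^2 / a)) (Set.Ioi 0) := by
  set X : ℝ := max 1 (Real.exp a) with hX
  have hX1 : (1:ℝ) ≤ X := le_max_left _ _
  have hX0 : (0:ℝ) < X := by linarith
  have hcont : Continuous (fun x : ℝ => Real.exp (-(Real.log (1+x^2))^2 / a)) := by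
    have h1 : Continuous fun x : ℝ => Real.log (1+x^2) :=
      (continuous_const.add (continuous_pow 2)).log (fun x => (by positivity : (0:ℝ) < 1 + x^2).ne')
    exact (((h1.pow 2).neg).div_const a).rexp
  have h1 : IntegrableOn (fun x => Real.exp (-(Real.log (1+x^2))^2 / a)) (Set.Ioc 0 X) :=
    (hcont.continuousOn.integrableOn_Icc (a := 0) (b := X)).mono_set Set.Ioc_subset_Icc_self
  have h2 : IntegrableOn (fun x => Real.exp (-(Real.log (1+x^2))^2 / a)) (Set.Ioi X) := by
    have hrint : IntegrableOn (fun x : ℝ => x ^ (-2 : ℝ)) (Set.Ioi X) :=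
      integrableOn_Ioi_rpow_of_lt (by norm_num) hX0
    apply Integrable.mono hrint (hcont.aestronglyMeasurable.restrict)
    rw [ae_restrict_iff' measurableSet_Ioi]
    apply Filter.Eventually.of_forall
    intro x hx
    have hx1 : (1:ℝ) < x := lt_of_le_of_lt hX1 hx
    have hx0 : (0:ℝ) < x := by linarith
    have hlx : 0 ≤ Real.log x := Real.log_nonneg hx1.le
    have hlX : a ≤ Real.log x := by
      calc a = Real.log (Real.exp a) := (Real.log_exp a).symm
        _ ≤ Real.log X := Real.log_le_log (Real.exp_pos a) (le_max_right _ _)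
        _ ≤ Real.log x := Real.log_le_log hX0 hx.le
    have hkey : 2 * Real.log x ≤ (Real.log (1+x^2))^2 / a := by
      have hl2 : 2 * Real.log x ≤ Real.log (1+x^2) := by
        rw [show (2:ℝ) * Real.log x = Real.log (x^2) by
          rw [Real.log_pow]; push_cast; ring]
        exact Real.log_le_log (by positivity) (by nlinarith)
      rw [le_div_iff₀ ha]
      nlinarith [Real.log_nonneg (show (1:ℝ) ≤ 1 + x^2 by nlinarith)]
    rw [Real.norm_eq_abs, Real.norm_eq_abs, abs_of_nonneg (Real.exp_pos _).le,
      abs_of_nonneg (Real.rpow_nonneg hx0.le _)]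
    calc Real.exp (-(Real.log (1+x^2))^2 / a) ≤ Real.exp (-(2 * Real.log x)) := by
          apply Real.exp_le_exp.2
          rw [neg_div]
          linarith
      _ = x ^ (-2 : ℝ) := by
          rw [Real.rpow_def_of_pos hx0]
          ring_nf
    -- done
  have : Set.Ioi (0:ℝ) = Set.Ioc 0 X ∪ Set.Ioi X := (Set.Ioc_union_Ioi_eq_Ioi hX0.le).symm
  rw [this]
  exact h1.union h2

/-- integrability of the endpoint-singular Gaussian dominating function -/
lemma integ_sing {r t : ℝ} (hr : 0 < r) (ht : 0 < t) :
    IntegrableOn (fun s => (s - r) ^ (-(1:ℝ)/2) * Real.exp (-s^2/(8*t))) (Set.Ioi r) := by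
  have hmeas : AEStronglyMeasurable
      (fun s => (s - r) ^ (-(1:ℝ)/2) * Real.exp (-s^2/(8*t)))
      (volume.restrict (Set.Ioi r)) := by
    apply AEStronglyMeasurable.mul
    · exact (Measurable.stronglyMeasurable (by measurability)).aestronglyMeasurable
    · exact (((continuous_pow 2).neg.div_const (8*t)).rexp).aestronglyMeasurable.restrict
  have h1 : IntegrableOn (fun s => (s - r) ^ (-(1:ℝ)/2) * Real.exp (-s^2/(8*t)))
      (Set.Ioc r (r+1)) := by
    have base : IntervalIntegrable (fun x : ℝ => x ^ (-(1:ℝ)/2)) volume 0 1 :=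
      intervalIntegral.intervalIntegrable_rpow' (by norm_num)
    have shifted := base.comp_sub_right r
    have : IntegrableOn (fun s : ℝ => (s - r) ^ (-(1:ℝ)/2)) (Set.Ioc r (r+1)) := by
      have := shifted.1
      simpa [zero_add, add_comm] using this
    apply Integrable.mono this (hmeas.mono_set Set.Ioc_subset_Ioi_self)
    rw [ae_restrict_iff' measurableSet_Ioc]
    apply Filter.Eventually.of_forall
    intro x hx
    have hx0 : 0 < x - r := sub_pos.2 hx.1
    have hb : 0 ≤ (x - r) ^ (-(1:ℝ)/2) := Real.rpow_nonneg hx0.le _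
    rw [Real.norm_eq_abs, Real.norm_eq_abs,
      abs_of_nonneg (mul_nonneg hb (Real.exp_pos _).le), abs_of_nonneg hb]
    nlinarith [Real.exp_le_one_iff.2 (show -x^2/(8*t) ≤ 0 by
        have : 0 ≤ x^2/(8*t) := by positivity
        rw [neg_div]; linarith),
      Real.exp_pos (-x^2/(8*t))]
  have h2 : IntegrableOn (fun s => (s - r) ^ (-(1:ℝ)/2) * Real.exp (-s^2/(8*t)))
      (Set.Ioi (r+1)) := by
    have hg : IntegrableOn (fun s : ℝ => Real.exp (-(1/(8*t)) * s^2)) (Set.Ioi (r+1)) :=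
      (integrable_exp_neg_mul_sq (by positivity)).integrableOn
    have hg' : IntegrableOn (fun s : ℝ => Real.exp (-s^2/(8*t))) (Set.Ioi (r+1)) := by
      apply hg.congr_fun _ measurableSet_Ioi
      intro x _
      ring_nf
    apply Integrable.mono hg' (hmeas.mono_set (Set.Ioi_subset_Ioi (by linarith)))
    rw [ae_restrict_iff' measurableSet_Ioi]
    apply Filter.Eventually.of_forall
    intro x hx
    have hx1 : 1 ≤ x - r := by have := Set.mem_Ioi.1 hx; linarith
    have hx0 : 0 < x - r := by linarith
    have hrp : (x - r) ^ (-(1:ℝ)/2) ≤ 1 :=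
      Real.rpow_le_one_of_one_le_of_nonpos hx1 (by norm_num)
    have hb : 0 ≤ (x - r) ^ (-(1:ℝ)/2) := Real.rpow_nonneg hx0.le _
    rw [Real.norm_eq_abs, Real.norm_eq_abs,
      abs_of_nonneg (mul_nonneg hb (Real.exp_pos _).le), abs_of_nonneg (Real.exp_pos _).le]
    nlinarith [Real.exp_pos (-x^2/(8*t))]
  have : Set.Ioi r = Set.Ioc r (r+1) ∪ Set.Ioi (r+1) := (Set.Ioc_union_Ioi_eq_Ioi (by linarith)).symm
  rw [this]
  exact h1.union h2
end Aux
section CoV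

lemma one_lt_arg {r : ℝ} (hr : 0 < r) (x : ℝ) : 1 < x^2 + Real.cosh r := by
  nlinarith [Real.one_lt_cosh.2 hr.ne' , sq_nonneg x]

lemma sqrt_arg_pos {r : ℝ} (hr : 0 < r) (x : ℝ) :
    0 < Real.sqrt ((x^2 + Real.cosh r)^2 - 1) := by
  have := one_lt_arg hr x
  apply Real.sqrt_pos.2
  nlinarith

lemma fmap_ge {r : ℝ} (hr : 0 < r) (x : ℝ) : r ≤ acosh (x^2 + Real.cosh r) := by
  have h := acosh_le_acosh (Real.one_le_cosh r) (by nlinarith [sq_nonneg x] : Real.cosh r ≤ x^2 + Real.cosh r)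
  rwa [acosh_cosh hr.le] at h

lemma fmap_pos {r : ℝ} (hr : 0 < r) (x : ℝ) : 0 < acosh (x^2 + Real.cosh r) :=
  lt_of_lt_of_le hr (fmap_ge hr x)

lemma fmap_gt {r : ℝ} (hr : 0 < r) {x : ℝ} (hx : 0 < x) : r < acosh (x^2 + Real.cosh r) := by
  rcases lt_or_ge r (acosh (x^2 + Real.cosh r)) with h | h
  · exact h
  · exfalso
    have h1 : Real.cosh (acosh (x^2 + Real.cosh r)) ≤ Real.cosh r :=
      Real.cosh_strictMonoOn.monotoneOn (Set.mem_Ici.2 (acosh_nonneg _))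
        (Set.mem_Ici.2 hr.le) h
    rw [cosh_acosh (one_lt_arg hr x).le] at h1
    nlinarith

lemma cosh_fmap {r : ℝ} (hr : 0 < r) (x : ℝ) :
    Real.cosh (acosh (x^2 + Real.cosh r)) = x^2 + Real.cosh r :=
  cosh_acosh (one_lt_arg hr x).le

lemma sinh_fmap (r x : ℝ) :
    Real.sinh (acosh (x^2 + Real.cosh r)) = Real.sqrt ((x^2 + Real.cosh r)^2 - 1) :=
  sinh_acosh _

lemma hasDerivAt_fmap {r : ℝ} (hr : 0 < r) (x : ℝ) :
    HasDerivAt (fun y => acosh (y^2 + Real.cosh r))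
      (2 * x / Real.sqrt ((x^2 + Real.cosh r)^2 - 1)) x := by
  have h := (hasDerivAt_acosh (one_lt_arg hr x)).comp x
    ((hasDerivAt_pow 2 x).add_const (Real.cosh r))
  refine h.congr_deriv ?_
  push_cast
  rw [pow_one, div_eq_mul_inv]
  ring

lemma fmap_tendsto {r : ℝ} (hr : 0 < r) :
    Filter.Tendsto (fun x => acosh (x^2 + Real.cosh r)) Filter.atTop Filter.atTop := by
  apply Filter.tendsto_atTop_mono (fun x => log_le_acosh (one_lt_arg hr x).le)
  apply Real.tendsto_log_atTop.comp
  apply Filter.tendsto_atTop_add_const_right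
  exact Filter.tendsto_pow_atTop (by norm_num)

/-- the change of variables `s = acosh (x² + cosh r)` for integrals over `Ioi r`. -/
lemma cov {r : ℝ} (hr : 0 < r) {g : ℝ → ℝ}
    (hg_cont : ContinuousOn g (Set.Ioi r))
    (hg1 : IntegrableOn g (Set.Ici r))
    (hg2 : IntegrableOn
      (fun x => (2 * x / Real.sqrt ((x^2 + Real.cosh r)^2 - 1)) * g (acosh (x^2 + Real.cosh r)))
      (Set.Ici 0)) :
    ∫ x in Set.Ioi 0,
        (2 * x / Real.sqrt ((x^2 + Real.cosh r)^2 - 1)) * g (acosh (x^2 + Real.cosh r))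
      = ∫ s in Set.Ioi r, g s := by
  have hf0 : acosh ((0:ℝ)^2 + Real.cosh r) = r := by
    rw [show (0:ℝ)^2 + Real.cosh r = Real.cosh r by norm_num, acosh_cosh hr.le]
  have himage1 : (fun y => acosh (y^2 + Real.cosh r)) '' Set.Ioi 0 ⊆ Set.Ioi r := by
    rintro - ⟨x, hx, rfl⟩
    exact Set.mem_Ioi.2 (fmap_gt hr hx)
  have himage2 : (fun y => acosh (y^2 + Real.cosh r)) '' Set.Ici 0 ⊆ Set.Ici r := by
    rintro - ⟨x, hx, rfl⟩
    exact Set.mem_Ici.2 (fmap_ge hr x)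
  have h := MeasureTheory.integral_comp_smul_deriv_Ioi
    (f := fun y => acosh (y^2 + Real.cosh r))
    (f' := fun x => 2 * x / Real.sqrt ((x^2 + Real.cosh r)^2 - 1))
    (g := g) (a := 0)
    ((continuous_acosh.comp (by continuity)).continuousOn)
    (fmap_tendsto hr)
    (fun x _ => (hasDerivAt_fmap hr x).hasDerivWithinAt)
    (hg_cont.mono himage1)
    (hg1.mono_set himage2)
    (by simpa [smul_eq_mul] using hg2)
  rw [hf0] at h
  simpa [smul_eq_mul, Function.comp] using h

end CoV
section Repr

lemma pow_neg_half_sq {x : ℝ} (hx : 0 < x) : ((x:ℝ)^2) ^ (-(1:ℝ)/2) = x⁻¹ := by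
  rw [← Real.rpow_natCast x 2, ← Real.rpow_mul hx.le]
  norm_num
  exact Real.rpow_neg_one x

lemma s_exp_le {t s : ℝ} (ht : 0 < t) (hs : 0 ≤ s) :
    s * Real.exp (-t - s^2/(4*t)) ≤ Real.exp (-t) * ((1+8*t) * Real.exp (-s^2/(8*t))) := by
  have hE : Real.exp (-t - s^2/(4*t))
      = Real.exp (-t) * (Real.exp (-s^2/(8*t)) * Real.exp (-s^2/(8*t))) := by
    rw [← Real.exp_add, ← Real.exp_add]; ring_nf
  have hE8 : 0 < Real.exp (-s^2/(8*t)) := Real.exp_pos _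
  have he1 : Real.exp (-s^2/(8*t)) ≤ 1 := by
    apply Real.exp_le_one_iff.2
    have : 0 ≤ s^2/(8*t) := by positivity
    rw [neg_div]; linarith
  have hkey : s * Real.exp (-s^2/(8*t)) ≤ 1 + 8*t := by
    rcases le_or_gt s 1 with h | h
    · nlinarith
    · nlinarith [sq_exp_le (t := t) (s := s) ht]
  rw [hE]
  calc s * (Real.exp (-t) * (Real.exp (-s^2/(8*t)) * Real.exp (-s^2/(8*t))))
      = Real.exp (-t) * (Real.exp (-s^2/(8*t)) * (s * Real.exp (-s^2/(8*t)))) := by ring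
    _ ≤ Real.exp (-t) * (Real.exp (-s^2/(8*t)) * (1+8*t)) := by
        apply mul_le_mul_of_nonneg_left _ (Real.exp_pos _).le
        exact mul_le_mul_of_nonneg_left hkey hE8.le
    _ = Real.exp (-t) * ((1+8*t) * Real.exp (-s^2/(8*t))) := by ring

lemma integrable_K2_integrand {t r : ℝ} (ht : 0 < t) (hr : 0 < r) :
    IntegrableOn (fun s => Real.exp ((3/4)*t) * K₃ t s * Real.sinh s *
      (Real.cosh s - Real.cosh r) ^ (-(1:ℝ)/2)) (Set.Ici r) := by
  rw [integrableOn_Ici_iff_integrableOn_Ioi]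
  have hσr : 0 < Real.sinh r := Real.sinh_pos_iff.2 hr
  have hApos : (0:ℝ) < (4*π*t) ^ (-(3:ℝ)/2) := Real.rpow_pos_of_pos (by positivity) _
  set A := (4*π*t) ^ (-(3:ℝ)/2) with hAdef
  set C := Real.exp ((3/4)*t) * A * Real.exp (-t) * (1+8*t) * (Real.sinh r) ^ (-(1:ℝ)/2)
    with hCdef
  have hCpos : 0 < C := by
    rw [hCdef]
    exact mul_pos (mul_pos (mul_pos (mul_pos (Real.exp_pos _) hApos) (Real.exp_pos _))
      (by linarith)) (Real.rpow_pos_of_pos hσr _)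
  have hmeas : ContinuousOn (fun s => Real.exp ((3/4)*t) * K₃ t s * Real.sinh s *
      (Real.cosh s - Real.cosh r) ^ (-(1:ℝ)/2)) (Set.Ioi r) := by
    apply ContinuousOn.mul
    · exact ((continuousOn_const.mul (continuousOn_K₃.mono
        (Set.Ioi_subset_Ioi hr.le))).mul Real.continuous_sinh.continuousOn)
    · apply ContinuousOn.rpow_const
        ((Real.continuous_cosh.continuousOn).sub continuousOn_const)
      intro s hs
      left
      have := cosh_lower hr.le (le_of_lt (Set.mem_Ioi.1 hs))
      have h0 : 0 < Real.sinh r * (s - r) := mul_pos hσr (by linarith [Set.mem_Ioi.1 hs])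
      simp only [Pi.sub_apply]
      nlinarith
  apply Integrable.mono ((integ_sing hr ht).const_mul C)
    (hmeas.aestronglyMeasurable measurableSet_Ioi)
  rw [ae_restrict_iff' measurableSet_Ioi]
  apply Filter.Eventually.of_forall
  intro s hs
  have hrs : r < s := Set.mem_Ioi.1 hs
  have hs0 : 0 < s := hr.trans hrs
  have hσs : 0 < Real.sinh s := Real.sinh_pos_iff.2 hs0
  have hK : K₃ t s * Real.sinh s = A * s * Real.exp (-t - s^2/(4*t)) := by
    rw [K₃, ← hAdef]; field_simp
  have hcl := cosh_lower hr.le hrs.le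
  have h0 : 0 < Real.sinh r * (s - r) := mul_pos hσr (by linarith)
  have hpw_pos : 0 < Real.cosh s - Real.cosh r := by nlinarith
  have h3 : (Real.cosh s - Real.cosh r) ^ (-(1:ℝ)/2)
      ≤ (Real.sinh r) ^ (-(1:ℝ)/2) * (s - r) ^ (-(1:ℝ)/2) := by
    have h4 := rpow_neg_half_le h0 hcl
    rwa [Real.mul_rpow hσr.le (by linarith : (0:ℝ) ≤ s - r)] at h4
  have hZnn : (0:ℝ) ≤ (Real.sinh r) ^ (-(1:ℝ)/2) * (s - r) ^ (-(1:ℝ)/2) :=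
    mul_nonneg (Real.rpow_nonneg hσr.le _) (Real.rpow_nonneg (by linarith) _)
  have hpw_nn : (0:ℝ) ≤ (Real.cosh s - Real.cosh r) ^ (-(1:ℝ)/2) :=
    Real.rpow_nonneg hpw_pos.le _
  have hfnn : (0:ℝ) ≤ Real.exp ((3/4)*t) * K₃ t s * Real.sinh s *
      (Real.cosh s - Real.cosh r) ^ (-(1:ℝ)/2) := by
    have := K₃_nonneg ht hs0.le
    have := Real.exp_pos ((3/4)*t)
    positivity
  rw [Real.norm_eq_abs, Real.norm_eq_abs, abs_of_nonneg hfnn, abs_of_nonneg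
    (mul_nonneg hCpos.le (mul_nonneg (Real.rpow_nonneg (by linarith) _) (Real.exp_pos _).le))]
  have hsE := s_exp_le ht hs0.le
  calc Real.exp ((3/4)*t) * K₃ t s * Real.sinh s * (Real.cosh s - Real.cosh r) ^ (-(1:ℝ)/2)
      = (Real.exp ((3/4)*t) * A) * (s * Real.exp (-t - s^2/(4*t)))
        * (Real.cosh s - Real.cosh r) ^ (-(1:ℝ)/2) := by
        rw [show Real.exp ((3/4)*t) * K₃ t s * Real.sinh s
          = Real.exp ((3/4)*t) * (K₃ t s * Real.sinh s) by ring, hK]; ring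
    _ ≤ (Real.exp ((3/4)*t) * A) * (s * Real.exp (-t - s^2/(4*t)))
        * ((Real.sinh r) ^ (-(1:ℝ)/2) * (s - r) ^ (-(1:ℝ)/2)) := by
        apply mul_le_mul_of_nonneg_left h3
        exact mul_nonneg (mul_nonneg (Real.exp_pos _).le hApos.le)
          (mul_nonneg hs0.le (Real.exp_pos _).le)
    _ ≤ (Real.exp ((3/4)*t) * A) * (Real.exp (-t) * ((1+8*t) * Real.exp (-s^2/(8*t))))
        * ((Real.sinh r) ^ (-(1:ℝ)/2) * (s - r) ^ (-(1:ℝ)/2)) := by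
        apply mul_le_mul_of_nonneg_right _ hZnn
        exact mul_le_mul_of_nonneg_left hsE
          (mul_nonneg (Real.exp_pos _).le hApos.le)
    _ = C * ((s - r) ^ (-(1:ℝ)/2) * Real.exp (-s^2/(8*t))) := by
        rw [hCdef]; ring

lemma integrable_K2'_integrand {t r : ℝ} (ht : 0 < t) (hr : 0 < r) :
    IntegrableOn (fun s => Real.exp ((3/4)*t) * K₃' t s * Real.sinh r *
      (Real.cosh s - Real.cosh r) ^ (-(1:ℝ)/2)) (Set.Ici r) := by
  rw [integrableOn_Ici_iff_integrableOn_Ioi]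
  have hσr : 0 < Real.sinh r := Real.sinh_pos_iff.2 hr
  have hApos : (0:ℝ) < (4*π*t) ^ (-(3:ℝ)/2) := Real.rpow_pos_of_pos (by positivity) _
  set D := (4*π*t) ^ (-(3:ℝ)/2) * Real.exp (-t) * (1 + 6/Real.sinh r) with hDdef
  have hDpos : 0 < D := by
    rw [hDdef]
    exact mul_pos (mul_pos hApos (Real.exp_pos _)) (by positivity)
  set C := Real.exp ((3/4)*t) * D * Real.sinh r * (Real.sinh r) ^ (-(1:ℝ)/2) with hCdef
  have hCpos : 0 < C := by
    rw [hCdef]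
    exact mul_pos (mul_pos (mul_pos (Real.exp_pos _) hDpos) hσr)
      (Real.rpow_pos_of_pos hσr _)
  have hmeas : ContinuousOn (fun s => Real.exp ((3/4)*t) * K₃' t s * Real.sinh r *
      (Real.cosh s - Real.cosh r) ^ (-(1:ℝ)/2)) (Set.Ioi r) := by
    apply ContinuousOn.mul
    · exact ((continuousOn_const.mul ((continuousOn_K₃' ht).mono
        (Set.Ioi_subset_Ioi hr.le))).mul continuousOn_const)
    · apply ContinuousOn.rpow_const
        ((Real.continuous_cosh.continuousOn).sub continuousOn_const)
      intro s hs
      left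
      have := cosh_lower hr.le (le_of_lt (Set.mem_Ioi.1 hs))
      have h0 : 0 < Real.sinh r * (s - r) := mul_pos hσr (by linarith [Set.mem_Ioi.1 hs])
      simp only [Pi.sub_apply]
      nlinarith
  apply Integrable.mono ((integ_sing hr ht).const_mul C)
    (hmeas.aestronglyMeasurable measurableSet_Ioi)
  rw [ae_restrict_iff' measurableSet_Ioi]
  apply Filter.Eventually.of_forall
  intro s hs
  have hrs : r < s := Set.mem_Ioi.1 hs
  have hs0 : 0 < s := hr.trans hrs
  have hcl := cosh_lower hr.le hrs.le
  have h0 : 0 < Real.sinh r * (s - r) := mul_pos hσr (by linarith)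
  have hpw_pos : 0 < Real.cosh s - Real.cosh r := by nlinarith
  have h3 : (Real.cosh s - Real.cosh r) ^ (-(1:ℝ)/2)
      ≤ (Real.sinh r) ^ (-(1:ℝ)/2) * (s - r) ^ (-(1:ℝ)/2) := by
    have h4 := rpow_neg_half_le h0 hcl
    rwa [Real.mul_rpow hσr.le (by linarith : (0:ℝ) ≤ s - r)] at h4
  have hZnn : (0:ℝ) ≤ (Real.sinh r) ^ (-(1:ℝ)/2) * (s - r) ^ (-(1:ℝ)/2) :=
    mul_nonneg (Real.rpow_nonneg hσr.le _) (Real.rpow_nonneg (by linarith) _)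
  have hpw_nn : (0:ℝ) ≤ (Real.cosh s - Real.cosh r) ^ (-(1:ℝ)/2) :=
    Real.rpow_nonneg hpw_pos.le _
  have hKb : |K₃' t s| ≤ D * Real.exp (-s^2/(8*t)) := by
    rw [hDdef]
    have := K₃'_bound ht hr hrs.le
    calc |K₃' t s| ≤ (4*π*t) ^ (-(3:ℝ)/2) * Real.exp (-t) * (1 + 6/Real.sinh r)
          * Real.exp (-s^2/(8*t)) := this
      _ = (4*π*t) ^ (-(3:ℝ)/2) * Real.exp (-t) * (1 + 6/Real.sinh r)
          * Real.exp (-s^2/(8*t)) := by ring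
  rw [Real.norm_eq_abs, Real.norm_eq_abs, abs_of_nonneg
    (mul_nonneg hCpos.le (mul_nonneg (Real.rpow_nonneg (by linarith) _) (Real.exp_pos _).le))]
  calc |Real.exp ((3/4)*t) * K₃' t s * Real.sinh r *
        (Real.cosh s - Real.cosh r) ^ (-(1:ℝ)/2)|
      = Real.exp ((3/4)*t) * |K₃' t s| * Real.sinh r *
        (Real.cosh s - Real.cosh r) ^ (-(1:ℝ)/2) := by
        rw [abs_mul, abs_mul, abs_mul, abs_of_nonneg (Real.exp_pos _).le,
          abs_of_nonneg hσr.le, abs_of_nonneg hpw_nn]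
    _ ≤ Real.exp ((3/4)*t) * (D * Real.exp (-s^2/(8*t))) * Real.sinh r *
        ((Real.sinh r) ^ (-(1:ℝ)/2) * (s - r) ^ (-(1:ℝ)/2)) := by
        apply mul_le_mul _ h3 hpw_nn _
        · apply mul_le_mul_of_nonneg_right _ hσr.le
          exact mul_le_mul_of_nonneg_left hKb (Real.exp_pos _).le
        · positivity
    _ = C * ((s - r) ^ (-(1:ℝ)/2) * Real.exp (-s^2/(8*t))) := by
        rw [hCdef]; ring

end Repr
section Repr2

lemma cont_fmap (r : ℝ) : Continuous (fun x : ℝ => acosh (x^2 + Real.cosh r)) :=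
  continuous_acosh.comp (by continuity)

lemma aesm_P {t r : ℝ} (hr : 0 < r) :
    AEStronglyMeasurable (fun x => 2 * Real.exp ((3/4)*t) * K₃ t (acosh (x^2 + Real.cosh r)))
      (volume.restrict (Set.Ioi 0)) := by
  apply ContinuousOn.aestronglyMeasurable _ measurableSet_Ioi
  exact continuousOn_const.mul (continuousOn_K₃.comp (cont_fmap r).continuousOn
    (fun x _ => Set.mem_Ioi.2 (fmap_pos hr x)))

lemma aesm_Q {t r : ℝ} (ht : 0 < t) (hr : 0 < r) :
    AEStronglyMeasurable (fun x => 2 * Real.exp ((3/4)*t) * K₃' t (acosh (x^2 + Real.cosh r)) *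
      (Real.sinh r / Real.sqrt ((x^2 + Real.cosh r)^2 - 1))) (volume.restrict (Set.Ioi 0)) := by
  apply ContinuousOn.aestronglyMeasurable _ measurableSet_Ioi
  apply ContinuousOn.mul
  · exact continuousOn_const.mul ((continuousOn_K₃' ht).comp (cont_fmap r).continuousOn
      (fun x _ => Set.mem_Ioi.2 (fmap_pos hr x)))
  · apply Continuous.continuousOn
    exact continuous_const.div (Real.continuous_sqrt.comp (by continuity))
      (fun x => (sqrt_arg_pos hr x).ne')

lemma integrable_P {t r : ℝ} (ht : 0 < t) (hr : 0 < r) :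
    IntegrableOn (fun x => 2 * Real.exp ((3/4)*t) * K₃ t (acosh (x^2 + Real.cosh r)))
      (Set.Ioi 0) := by
  have hApos : (0:ℝ) < (4*π*t) ^ (-(3:ℝ)/2) := Real.rpow_pos_of_pos (by positivity) _
  set C := 2 * Real.exp ((3/4)*t) * ((4*π*t) ^ (-(3:ℝ)/2) * Real.exp (-t)) with hCdef
  have hCpos : 0 < C := by
    rw [hCdef]
    exact mul_pos (mul_pos two_pos (Real.exp_pos _)) (mul_pos hApos (Real.exp_pos _))
  apply Integrable.mono ((integrable_exp_log_sq (show (0:ℝ) < 4*t by linarith)).const_mul C)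
    (aesm_P hr)
  apply Filter.Eventually.of_forall
  intro x
  set s := acosh (x^2 + Real.cosh r) with hsdef
  have hs0 : 0 ≤ s := acosh_nonneg _
  have hln : 0 ≤ Real.log (1+x^2) := Real.log_nonneg (by nlinarith [sq_nonneg x])
  have hls : Real.log (1+x^2) ≤ s := by
    calc Real.log (1+x^2) ≤ Real.log (x^2 + Real.cosh r) :=
          Real.log_le_log (by nlinarith [sq_nonneg x])
            (by nlinarith [Real.one_le_cosh r])
      _ ≤ s := log_le_acosh (one_lt_arg hr x).le
  have hKle := K₃_le ht hs0
  have hmono := exp_sq_anti (show (0:ℝ) < 4*t by linarith) hln hls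
  have hKnn := K₃_nonneg ht hs0
  rw [Real.norm_eq_abs, Real.norm_eq_abs,
    abs_of_nonneg (by positivity : (0:ℝ) ≤ 2 * Real.exp ((3/4)*t) * K₃ t s),
    abs_of_nonneg (mul_nonneg hCpos.le (Real.exp_pos _).le)]
  calc 2 * Real.exp ((3/4)*t) * K₃ t s
      ≤ 2 * Real.exp ((3/4)*t) * ((4*π*t) ^ (-(3:ℝ)/2) * Real.exp (-t)
        * Real.exp (-s^2/(4*t))) := by
        apply mul_le_mul_of_nonneg_left _ (by positivity)
        calc K₃ t s ≤ (4*π*t) ^ (-(3:ℝ)/2) * Real.exp (-t) * Real.exp (-s^2/(4*t)) := hKle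
          _ = (4*π*t) ^ (-(3:ℝ)/2) * Real.exp (-t) * Real.exp (-s^2/(4*t)) := by ring
    _ ≤ C * Real.exp (-(Real.log (1+x^2))^2/(4*t)) := by
        rw [hCdef]
        calc 2 * Real.exp ((3/4)*t) * ((4*π*t) ^ (-(3:ℝ)/2) * Real.exp (-t)
              * Real.exp (-s^2/(4*t)))
            = (2 * Real.exp ((3/4)*t) * ((4*π*t) ^ (-(3:ℝ)/2) * Real.exp (-t)))
              * Real.exp (-s^2/(4*t)) := by ring
          _ ≤ (2 * Real.exp ((3/4)*t) * ((4*π*t) ^ (-(3:ℝ)/2) * Real.exp (-t)))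
              * Real.exp (-(Real.log (1+x^2))^2/(4*t)) := by
              apply mul_le_mul_of_nonneg_left hmono
              positivity
    _ = C * Real.exp (-(Real.log (1+x^2))^2 / (4*t)) := by norm_num

lemma integrable_Q {t r : ℝ} (ht : 0 < t) (hr : 0 < r) :
    IntegrableOn (fun x => 2 * Real.exp ((3/4)*t) * K₃' t (acosh (x^2 + Real.cosh r)) *
      (Real.sinh r / Real.sqrt ((x^2 + Real.cosh r)^2 - 1))) (Set.Ioi 0) := by
  have hApos : (0:ℝ) < (4*π*t) ^ (-(3:ℝ)/2) := Real.rpow_pos_of_pos (by positivity) _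
  have hσr : 0 < Real.sinh r := Real.sinh_pos_iff.2 hr
  set D := (4*π*t) ^ (-(3:ℝ)/2) * Real.exp (-t) * (1 + 6/Real.sinh r) with hDdef
  have hDpos : 0 < D := mul_pos (mul_pos hApos (Real.exp_pos _)) (by positivity)
  set C := 2 * Real.exp ((3/4)*t) * D with hCdef
  have hCpos : 0 < C := by rw [hCdef]; positivity
  apply Integrable.mono ((integrable_exp_log_sq (show (0:ℝ) < 8*t by linarith)).const_mul C)
    (aesm_Q ht hr)
  apply Filter.Eventually.of_forall
  intro x
  set s := acosh (x^2 + Real.cosh r) with hsdef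
  have hs0 : 0 ≤ s := acosh_nonneg _
  have hsr : r ≤ s := fmap_ge hr x
  have hσs : 0 < Real.sinh s := Real.sinh_pos_iff.2 (hr.trans_le hsr)
  have hq1 : Real.sinh r / Real.sqrt ((x^2 + Real.cosh r)^2 - 1) ≤ 1 := by
    rw [← sinh_fmap r x, ← hsdef, div_le_one hσs]
    exact Real.sinh_le_sinh.2 hsr
  have hq0 : 0 ≤ Real.sinh r / Real.sqrt ((x^2 + Real.cosh r)^2 - 1) :=
    div_nonneg hσr.le (Real.sqrt_nonneg _)
  have hln : 0 ≤ Real.log (1+x^2) := Real.log_nonneg (by nlinarith [sq_nonneg x])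
  have hls : Real.log (1+x^2) ≤ s := by
    calc Real.log (1+x^2) ≤ Real.log (x^2 + Real.cosh r) :=
          Real.log_le_log (by nlinarith [sq_nonneg x])
            (by nlinarith [Real.one_le_cosh r])
      _ ≤ s := log_le_acosh (one_lt_arg hr x).le
  have hKb : |K₃' t s| ≤ D * Real.exp (-s^2/(8*t)) := by rw [hDdef]; exact K₃'_bound ht hr hsr
  have hmono := exp_sq_anti (show (0:ℝ) < 8*t by linarith) hln hls
  rw [Real.norm_eq_abs, Real.norm_eq_abs,
    abs_of_nonneg (mul_nonneg hCpos.le (Real.exp_pos _).le)]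
  calc |2 * Real.exp ((3/4)*t) * K₃' t s * (Real.sinh r / Real.sqrt ((x^2 + Real.cosh r)^2 - 1))|
      = 2 * Real.exp ((3/4)*t) * |K₃' t s|
        * (Real.sinh r / Real.sqrt ((x^2 + Real.cosh r)^2 - 1)) := by
        rw [abs_mul, abs_mul, abs_of_nonneg (by positivity : (0:ℝ) ≤ 2 * Real.exp ((3/4)*t)),
          abs_of_nonneg hq0]
    _ ≤ 2 * Real.exp ((3/4)*t) * (D * Real.exp (-s^2/(8*t))) * 1 := by
        apply mul_le_mul _ hq1 hq0 (by positivity)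
        exact mul_le_mul_of_nonneg_left hKb (by positivity)
    _ ≤ C * Real.exp (-(Real.log (1+x^2))^2/(8*t)) := by
        rw [hCdef, mul_one]
        calc 2 * Real.exp ((3/4)*t) * (D * Real.exp (-s^2/(8*t)))
            = (2 * Real.exp ((3/4)*t) * D) * Real.exp (-s^2/(8*t)) := by ring
          _ ≤ (2 * Real.exp ((3/4)*t) * D) * Real.exp (-(Real.log (1+x^2))^2/(8*t)) := by
              apply mul_le_mul_of_nonneg_left hmono (by positivity)

lemma K2_repr {t r : ℝ} (ht : 0 < t) (hr : 0 < r) :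
    K₂ t r = ∫ x in Set.Ioi 0, 2 * Real.exp ((3/4)*t) * K₃ t (acosh (x^2 + Real.cosh r)) := by
  have hpt : Set.EqOn
      (fun x => (2 * x / Real.sqrt ((x^2 + Real.cosh r)^2 - 1)) *
        (Real.exp ((3/4)*t) * K₃ t (acosh (x^2+Real.cosh r))
          * Real.sinh (acosh (x^2+Real.cosh r)) *
          (Real.cosh (acosh (x^2+Real.cosh r)) - Real.cosh r) ^ (-(1:ℝ)/2)))
      (fun x => 2 * Real.exp ((3/4)*t) * K₃ t (acosh (x^2 + Real.cosh r)))
      (Set.Ioi 0) := by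
    intro x hx
    have hx0 : (0:ℝ) < x := hx
    simp only
    rw [cosh_fmap hr, sinh_fmap, show x^2 + Real.cosh r - Real.cosh r = x^2 by ring,
      pow_neg_half_sq hx0]
    have hsq := (sqrt_arg_pos hr x).ne'
    field_simp
  have hg_cont : ContinuousOn (fun s => Real.exp ((3/4)*t) * K₃ t s * Real.sinh s *
      (Real.cosh s - Real.cosh r) ^ (-(1:ℝ)/2)) (Set.Ioi r) := by
    have hσr : 0 < Real.sinh r := Real.sinh_pos_iff.2 hr
    apply ContinuousOn.mul
    · exact ((continuousOn_const.mul (continuousOn_K₃.mono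
        (Set.Ioi_subset_Ioi hr.le))).mul Real.continuous_sinh.continuousOn)
    · apply ContinuousOn.rpow_const
        ((Real.continuous_cosh.continuousOn).sub continuousOn_const)
      intro s hs
      left
      have := cosh_lower hr.le (le_of_lt (Set.mem_Ioi.1 hs))
      have h0 : 0 < Real.sinh r * (s - r) := mul_pos hσr (by linarith [Set.mem_Ioi.1 hs])
      simp only [Pi.sub_apply]
      nlinarith
  have hg2 : IntegrableOn
      (fun x => (2 * x / Real.sqrt ((x^2 + Real.cosh r)^2 - 1)) *
        (Real.exp ((3/4)*t) * K₃ t (acosh (x^2+Real.cosh r))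
          * Real.sinh (acosh (x^2+Real.cosh r)) *
          (Real.cosh (acosh (x^2+Real.cosh r)) - Real.cosh r) ^ (-(1:ℝ)/2)))
      (Set.Ici 0) := by
    rw [integrableOn_Ici_iff_integrableOn_Ioi]
    exact (integrable_P ht hr).congr_fun hpt.symm measurableSet_Ioi
  have hcov := cov hr hg_cont (integrable_K2_integrand ht hr) hg2
  rw [K₂, ← hcov]
  exact MeasureTheory.setIntegral_congr_fun measurableSet_Ioi hpt

lemma K2'_repr {t r : ℝ} (ht : 0 < t) (hr : 0 < r) :
    (∫ s in Set.Ioi r, Real.exp ((3/4)*t) * K₃' t s * Real.sinh r *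
        (Real.cosh s - Real.cosh r) ^ (-(1:ℝ)/2))
      = ∫ x in Set.Ioi 0, 2 * Real.exp ((3/4)*t) * K₃' t (acosh (x^2 + Real.cosh r)) *
          (Real.sinh r / Real.sqrt ((x^2 + Real.cosh r)^2 - 1)) := by
  have hpt : Set.EqOn
      (fun x => (2 * x / Real.sqrt ((x^2 + Real.cosh r)^2 - 1)) *
        (Real.exp ((3/4)*t) * K₃' t (acosh (x^2+Real.cosh r)) * Real.sinh r *
          (Real.cosh (acosh (x^2+Real.cosh r)) - Real.cosh r) ^ (-(1:ℝ)/2)))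
      (fun x => 2 * Real.exp ((3/4)*t) * K₃' t (acosh (x^2 + Real.cosh r)) *
          (Real.sinh r / Real.sqrt ((x^2 + Real.cosh r)^2 - 1)))
      (Set.Ioi 0) := by
    intro x hx
    have hx0 : (0:ℝ) < x := hx
    simp only
    rw [cosh_fmap hr, show x^2 + Real.cosh r - Real.cosh r = x^2 by ring,
      pow_neg_half_sq hx0]
    have hsq := (sqrt_arg_pos hr x).ne'
    field_simp
  have hσr : 0 < Real.sinh r := Real.sinh_pos_iff.2 hr
  have hg_cont : ContinuousOn (fun s => Real.exp ((3/4)*t) * K₃' t s * Real.sinh r *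
      (Real.cosh s - Real.cosh r) ^ (-(1:ℝ)/2)) (Set.Ioi r) := by
    apply ContinuousOn.mul
    · exact ((continuousOn_const.mul ((continuousOn_K₃' ht).mono
        (Set.Ioi_subset_Ioi hr.le))).mul continuousOn_const)
    · apply ContinuousOn.rpow_const
        ((Real.continuous_cosh.continuousOn).sub continuousOn_const)
      intro s hs
      left
      have := cosh_lower hr.le (le_of_lt (Set.mem_Ioi.1 hs))
      have h0 : 0 < Real.sinh r * (s - r) := mul_pos hσr (by linarith [Set.mem_Ioi.1 hs])
      simp only [Pi.sub_apply]
      nlinarith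
  have hg2 : IntegrableOn
      (fun x => (2 * x / Real.sqrt ((x^2 + Real.cosh r)^2 - 1)) *
        (Real.exp ((3/4)*t) * K₃' t (acosh (x^2+Real.cosh r)) * Real.sinh r *
          (Real.cosh (acosh (x^2+Real.cosh r)) - Real.cosh r) ^ (-(1:ℝ)/2)))
      (Set.Ici 0) := by
    rw [integrableOn_Ici_iff_integrableOn_Ioi]
    exact (integrable_Q ht hr).congr_fun hpt.symm measurableSet_Ioi
  have hcov := cov hr hg_cont (integrable_K2'_integrand ht hr) hg2
  rw [← hcov]
  exact MeasureTheory.setIntegral_congr_fun measurableSet_Ioi hpt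

end Repr2
section Main

lemma hasDeriv_main {t ρ : ℝ} (ht : 0 < t) (hρ : 0 < ρ) :
    HasDerivAt (fun r => ∫ x in Set.Ioi 0, 2 * Real.exp ((3/4)*t) * K₃ t (acosh (x^2 + Real.cosh r)))
      (∫ x in Set.Ioi 0, 2 * Real.exp ((3/4)*t) * K₃' t (acosh (x^2 + Real.cosh ρ)) *
        (Real.sinh ρ / Real.sqrt ((x^2 + Real.cosh ρ)^2 - 1))) ρ := by
  have hhalf : (0:ℝ) < ρ/2 := by linarith
  have hApos : (0:ℝ) < (4*π*t) ^ (-(3:ℝ)/2) := Real.rpow_pos_of_pos (by positivity) _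
  have hσh : 0 < Real.sinh (ρ/2) := Real.sinh_pos_iff.2 hhalf
  set D := (4*π*t) ^ (-(3:ℝ)/2) * Real.exp (-t) * (1 + 6/Real.sinh (ρ/2)) with hDdef
  have hDpos : 0 < D := mul_pos (mul_pos hApos (Real.exp_pos _)) (by positivity)
  set bound := fun x : ℝ => 2 * Real.exp ((3/4)*t) * D
    * Real.exp (-(acosh (x^2 + Real.cosh (ρ/2)))^2/(8*t)) with hbdef
  have key := hasDerivAt_integral_of_dominated_loc_of_deriv_le
    (μ := volume.restrict (Set.Ioi 0)) (x₀ := ρ)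
    (F := fun r x => 2 * Real.exp ((3/4)*t) * K₃ t (acosh (x^2 + Real.cosh r)))
    (F' := fun r x => 2 * Real.exp ((3/4)*t) * K₃' t (acosh (x^2 + Real.cosh r)) *
      (Real.sinh r / Real.sqrt ((x^2 + Real.cosh r)^2 - 1)))
    (bound := bound) (Metric.ball_mem_nhds ρ hhalf)
    ((Filter.eventually_iff_exists_mem.2 ⟨Set.Ioi 0, Ioi_mem_nhds hρ, fun r hr => aesm_P hr⟩))
    (integrable_P ht hρ)
    (aesm_Q ht hρ)
    ?hbound ?hboundint ?hdiff
  · exact key.2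
  case hbound =>
    apply Filter.Eventually.of_forall
    intro x r hrball
    have hr2 : ρ/2 < r := by
      have h1 := Metric.mem_ball.1 hrball
      rw [Real.dist_eq] at h1
      have := abs_lt.1 h1
      linarith [this.1]
    have hr0 : 0 < r := hhalf.trans hr2
    set s := acosh (x^2 + Real.cosh r) with hsdef
    set m := acosh (x^2 + Real.cosh (ρ/2)) with hmdef
    have hms : m ≤ s := by
      apply acosh_le_acosh (one_lt_arg hhalf x).le
      have : Real.cosh (ρ/2) ≤ Real.cosh r := by
        rw [Real.cosh_le_cosh, abs_of_nonneg hhalf.le, abs_of_nonneg hr0.le]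
        exact hr2.le
      linarith
    have hm0 : 0 ≤ m := acosh_nonneg _
    have hcs : ρ/2 ≤ s := le_trans (le_of_lt (lt_of_lt_of_le hr2 (fmap_ge hr0 x)))
      (le_refl _)
    have hσs : 0 < Real.sinh s := Real.sinh_pos_iff.2 (hhalf.trans_le hcs)
    have hq1 : Real.sinh r / Real.sqrt ((x^2 + Real.cosh r)^2 - 1) ≤ 1 := by
      rw [← sinh_fmap r x, ← hsdef, div_le_one hσs]
      exact Real.sinh_le_sinh.2 (fmap_ge hr0 x)
    have hq0 : 0 ≤ Real.sinh r / Real.sqrt ((x^2 + Real.cosh r)^2 - 1) :=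
      div_nonneg (Real.sinh_pos_iff.2 hr0).le (Real.sqrt_nonneg _)
    have hKb : |K₃' t s| ≤ D * Real.exp (-s^2/(8*t)) := by
      rw [hDdef]; exact K₃'_bound ht hhalf hcs
    have hmono : Real.exp (-s^2/(8*t)) ≤ Real.exp (-m^2/(8*t)) :=
      exp_sq_anti (show (0:ℝ) < 8*t by linarith) hm0 hms
    rw [Real.norm_eq_abs]
    calc |2 * Real.exp ((3/4)*t) * K₃' t s *
          (Real.sinh r / Real.sqrt ((x^2 + Real.cosh r)^2 - 1))|
        = 2 * Real.exp ((3/4)*t) * |K₃' t s|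
          * (Real.sinh r / Real.sqrt ((x^2 + Real.cosh r)^2 - 1)) := by
          rw [abs_mul, abs_mul, abs_of_nonneg (by positivity : (0:ℝ) ≤ 2 * Real.exp ((3/4)*t)),
            abs_of_nonneg hq0]
      _ ≤ 2 * Real.exp ((3/4)*t) * (D * Real.exp (-s^2/(8*t))) * 1 := by
          apply mul_le_mul _ hq1 hq0 (by positivity)
          exact mul_le_mul_of_nonneg_left hKb (by positivity)
      _ ≤ bound x := by
          rw [hbdef, mul_one]
          simp only
          calc 2 * Real.exp ((3/4)*t) * (D * Real.exp (-s^2/(8*t)))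
              = (2 * Real.exp ((3/4)*t) * D) * Real.exp (-s^2/(8*t)) := by ring
            _ ≤ (2 * Real.exp ((3/4)*t) * D) * Real.exp (-m^2/(8*t)) := by
                apply mul_le_mul_of_nonneg_left hmono (by positivity)
  case hboundint =>
    have hC : 0 < 2 * Real.exp ((3/4)*t) * D := by positivity
    apply Integrable.mono ((integrable_exp_log_sq (show (0:ℝ) < 8*t by linarith)).const_mul
      (2 * Real.exp ((3/4)*t) * D))
    · apply Continuous.aestronglyMeasurable
      rw [hbdef]
      apply continuous_const.mul
      apply Real.continuous_exp.comp
      apply Continuous.div_const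
      exact (((cont_fmap (ρ/2)).pow 2).neg)
    · apply Filter.Eventually.of_forall
      intro x
      set m := acosh (x^2 + Real.cosh (ρ/2)) with hmdef
      have hm0 : 0 ≤ m := acosh_nonneg _
      have hln : 0 ≤ Real.log (1+x^2) := Real.log_nonneg (by nlinarith [sq_nonneg x])
      have hls : Real.log (1+x^2) ≤ m := by
        calc Real.log (1+x^2) ≤ Real.log (x^2 + Real.cosh (ρ/2)) :=
              Real.log_le_log (by nlinarith [sq_nonneg x])
                (by nlinarith [Real.one_le_cosh (ρ/2)])
          _ ≤ m := log_le_acosh (one_lt_arg hhalf x).le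
      have hmono := exp_sq_anti (show (0:ℝ) < 8*t by linarith) hln hls
      rw [Real.norm_eq_abs, Real.norm_eq_abs, hbdef]
      simp only
      rw [abs_of_nonneg (by positivity), abs_of_nonneg (by positivity)]
      exact mul_le_mul_of_nonneg_left hmono (by positivity)
  case hdiff =>
    apply Filter.Eventually.of_forall
    intro x r hrball
    have hr2 : ρ/2 < r := by
      have h1 := Metric.mem_ball.1 hrball
      rw [Real.dist_eq] at h1
      have := abs_lt.1 h1
      linarith [this.1]
    have hr0 : 0 < r := hhalf.trans hr2
    have hinner : HasDerivAt (fun r : ℝ => x^2 + Real.cosh r) (Real.sinh r) r :=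
      (Real.hasDerivAt_cosh r).const_add (x^2)
    have hacosh := (hasDerivAt_acosh (one_lt_arg hr0 x)).comp r hinner
    have hK := (hasDerivAt_K₃ ht (fmap_pos hr0 x)).comp r hacosh
    have := hK.const_mul (2 * Real.exp ((3/4)*t))
    refine this.congr_deriv ?_
    rw [div_eq_mul_inv]
    ring
end Main

theorem stmt_16 (t : ℝ) (ht : 0 < t) (ρ : ℝ) (hρ : 0 < ρ) :
    deriv (fun r => K₂ t r) ρ =
      ∫ s in Set.Ioi ρ,
        Real.exp ((3 / 4) * t) * deriv (fun u => K₃ t u) s * Real.sinh ρ *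
          (Real.cosh s - Real.cosh ρ) ^ (-(1 : ℝ) / 2) := by
  have hev : (fun r => K₂ t r) =ᶠ[nhds ρ]
      (fun r => ∫ x in Set.Ioi 0,
        2 * Real.exp ((3/4)*t) * K₃ t (acosh (x^2 + Real.cosh r))) := by
    filter_upwards [Ioi_mem_nhds hρ] with r hr
    exact K2_repr ht hr
  rw [hev.deriv_eq, (hasDeriv_main ht hρ).deriv, ← K2'_repr ht hρ]
  apply MeasureTheory.setIntegral_congr_fun measurableSet_Ioi
  intro s hs
  simp only
  rw [deriv_K₃ ht (hρ.trans hs)]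
end

section
/- Define K₂(t,ρ) = ∫_ρ^∞ e^{(3/4)t} K₃(t,s) sinh(s) (cosh s - cosh ρ)^{-1/2} ds for t > 0 and ρ > 0, where K₃(t,s) = (4πt)^{-3/2} (s/sinh s) e^{-t - s²/(4t)}. Then for every t > 0 and every ρ > 0, ∂²_ρ K₂(t,ρ) - coth(ρ) ∂_ρ K₂(t,ρ) = ∫_ρ^∞ e^{(3/4)t} (∂²_s K₃(t,s) - coth(s) ∂_s K₃(t,s)) · (sinh²(ρ)/sinh(s)) · (cosh s - cosh ρ)^{-1/2} ds. -/
open Real MeasureTheory Set Metric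

noncomputable def ar (x : ℝ) : ℝ := Real.log (x + Real.sqrt (x ^ 2 - 1))

lemma sq1 {x : ℝ} (hx : 1 < x) : 0 < x ^ 2 - 1 := by nlinarith

lemma arg_pos {x : ℝ} (hx : 1 ≤ x) : 0 < x + Real.sqrt (x ^ 2 - 1) := by
  have := Real.sqrt_nonneg (x ^ 2 - 1); linarith

lemma exp_ar {x : ℝ} (hx : 1 ≤ x) : Real.exp (ar x) = x + Real.sqrt (x ^ 2 - 1) :=
  Real.exp_log (arg_pos hx)

lemma ar_nonneg {x : ℝ} (hx : 1 ≤ x) : 0 ≤ ar x := by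
  have := Real.sqrt_nonneg (x ^ 2 - 1)
  exact Real.log_nonneg (by linarith)

lemma ar_pos {x : ℝ} (hx : 1 < x) : 0 < ar x := by
  have h := Real.sqrt_pos.2 (sq1 hx)
  exact Real.log_pos (by linarith)

lemma cosh_ar {x : ℝ} (hx : 1 ≤ x) : Real.cosh (ar x) = x := by
  have hq : Real.sqrt (x ^ 2 - 1) ^ 2 = x ^ 2 - 1 := Real.sq_sqrt (by nlinarith)
  have hp := arg_pos hx
  rw [Real.cosh_eq, exp_ar hx, Real.exp_neg, exp_ar hx]
  field_simp
  nlinarith [hq]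

lemma sinh_ar {x : ℝ} (hx : 1 ≤ x) : Real.sinh (ar x) = Real.sqrt (x ^ 2 - 1) := by
  have hq : Real.sqrt (x ^ 2 - 1) ^ 2 = x ^ 2 - 1 := Real.sq_sqrt (by nlinarith)
  have hp := arg_pos hx
  rw [Real.sinh_eq, exp_ar hx, Real.exp_neg, exp_ar hx]
  field_simp
  nlinarith [hq]

lemma ar_cosh {s : ℝ} (hs : 0 ≤ s) : ar (Real.cosh s) = s := by
  unfold ar
  have h1 : Real.cosh s ^ 2 - 1 = Real.sinh s ^ 2 := by
    have := Real.cosh_sq s; linarith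
  rw [h1, Real.sqrt_sq (Real.sinh_nonneg_iff.2 hs), Real.cosh_add_sinh, Real.log_exp]

lemma hasDerivAt_ar {x : ℝ} (hx : 1 < x) :
    HasDerivAt ar (Real.sqrt (x ^ 2 - 1))⁻¹ x := by
  have h0 := sq1 hx
  have hq : 0 < Real.sqrt (x ^ 2 - 1) := Real.sqrt_pos.2 h0
  have h1 : HasDerivAt (fun y : ℝ => y ^ 2 - 1) (2 * x) x := by
    simpa using (hasDerivAt_pow 2 x).sub_const 1
  have h2 : HasDerivAt (fun y : ℝ => Real.sqrt (y ^ 2 - 1))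
      (2 * x / (2 * Real.sqrt (x ^ 2 - 1))) x := h1.sqrt (ne_of_gt h0)
  have h3 : HasDerivAt (fun y : ℝ => y + Real.sqrt (y ^ 2 - 1))
      (1 + 2 * x / (2 * Real.sqrt (x ^ 2 - 1))) x := (hasDerivAt_id x).add h2
  have h4 := h3.log (ne_of_gt (arg_pos hx.le))
  refine h4.congr_deriv ?_
  have hp := arg_pos hx.le
  field_simp
  ring

noncomputable def phi (t c : ℝ) : ℝ :=
  ar c * Real.exp (-(ar c) ^ 2 / (4 * t)) * (Real.sqrt (c ^ 2 - 1))⁻¹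

noncomputable def phi1 (t c : ℝ) : ℝ :=
  Real.exp (-(ar c) ^ 2 / (4 * t)) *
    ((1 - ar c ^ 2 / (2 * t)) / Real.sqrt (c ^ 2 - 1) ^ 2
      - ar c * c / Real.sqrt (c ^ 2 - 1) ^ 3)

noncomputable def phi2 (t c : ℝ) : ℝ :=
  Real.exp (-(ar c) ^ 2 / (4 * t)) *
    (-(ar c * (1 - ar c ^ 2 / (2 * t))) / (2 * t * Real.sqrt (c ^ 2 - 1) ^ 3)
      + ar c ^ 2 * c / (2 * t * Real.sqrt (c ^ 2 - 1) ^ 4)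
      - ar c / (t * Real.sqrt (c ^ 2 - 1) ^ 3)
      - 2 * c * (1 - ar c ^ 2 / (2 * t)) / Real.sqrt (c ^ 2 - 1) ^ 4
      - c / Real.sqrt (c ^ 2 - 1) ^ 4
      - ar c / Real.sqrt (c ^ 2 - 1) ^ 3
      + 3 * ar c * c ^ 2 / Real.sqrt (c ^ 2 - 1) ^ 5)

section derivs
variable {t c : ℝ} (ht : t ≠ 0) (hc : 1 < c)

lemma hasDerivAt_sqrtq (hc : 1 < c) :
    HasDerivAt (fun y : ℝ => Real.sqrt (y ^ 2 - 1)) (2 * c / (2 * Real.sqrt (c ^ 2 - 1))) c := by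
  have h1 : HasDerivAt (fun y : ℝ => y ^ 2 - 1) (2 * c) c := by
    simpa using (hasDerivAt_pow 2 c).sub_const 1
  exact h1.sqrt (ne_of_gt (sq1 hc))

lemma hasDerivAt_E (ht : t ≠ 0) (hc : 1 < c) :
    HasDerivAt (fun y : ℝ => Real.exp (-(ar y) ^ 2 / (4 * t)))
      (Real.exp (-(ar c) ^ 2 / (4 * t)) *
        (-(2 * ar c * (Real.sqrt (c ^ 2 - 1))⁻¹) / (4 * t))) c := by
  have ha := hasDerivAt_ar hc
  have hinner : HasDerivAt (fun y : ℝ => -(ar y) ^ 2 / (4 * t))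
      (-(2 * ar c * (Real.sqrt (c ^ 2 - 1))⁻¹) / (4 * t)) c := by
    have := ((ha.pow 2).neg).div_const (4 * t)
    refine this.congr_deriv ?_
    ring
  exact hinner.exp

lemma hasDerivAt_phi (ht : t ≠ 0) (hc : 1 < c) : HasDerivAt (phi t) (phi1 t c) c := by
  have hq : 0 < Real.sqrt (c ^ 2 - 1) := Real.sqrt_pos.2 (sq1 hc)
  have ha := hasDerivAt_ar hc
  have hE := hasDerivAt_E ht hc
  have hs := hasDerivAt_sqrtq hc
  have hinv := hs.inv (ne_of_gt hq)
  have h := (ha.mul hE).mul hinv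
  refine h.congr_deriv ?_
  unfold phi1
  simp only [Pi.mul_apply, Pi.inv_apply, Pi.pow_apply, Pi.div_apply, Pi.sub_apply]
  field_simp
  ring

lemma hasDerivAt_phi1 (ht : t ≠ 0) (hc : 1 < c) : HasDerivAt (phi1 t) (phi2 t c) c := by
  have hq : 0 < Real.sqrt (c ^ 2 - 1) := Real.sqrt_pos.2 (sq1 hc)
  have ha := hasDerivAt_ar hc
  have hE := hasDerivAt_E ht hc
  have hs := hasDerivAt_sqrtq hc
  have hnum1 : HasDerivAt (fun y : ℝ => 1 - ar y ^ 2 / (2 * t))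
      (-(2 * ar c * (Real.sqrt (c ^ 2 - 1))⁻¹ / (2 * t))) c := by
    have := ((ha.pow 2).div_const (2 * t)).const_sub 1
    refine this.congr_deriv ?_
    ring
  have hT1 := hnum1.div (hs.pow 2) (pow_ne_zero _ (ne_of_gt hq))
  have hnum2 : HasDerivAt (fun y : ℝ => ar y * y)
      ((Real.sqrt (c ^ 2 - 1))⁻¹ * c + ar c) c := by
    exact (ha.mul (hasDerivAt_id c)).congr_deriv (by simp)
  have hT2 := hnum2.div (hs.pow 3) (pow_ne_zero _ (ne_of_gt hq))
  have h := hE.mul (hT1.sub hT2)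
  refine h.congr_deriv ?_
  unfold phi2
  simp only [Pi.mul_apply, Pi.inv_apply, Pi.pow_apply, Pi.div_apply, Pi.sub_apply]
  field_simp
  ring

lemma ar_le_self {c : ℝ} (hc : 1 ≤ c) : ar c ≤ c := by
  have hc0 : (0:ℝ) < c := by linarith
  have h1 : Real.sqrt (c ^ 2 - 1) ≤ c := by
    calc Real.sqrt (c ^ 2 - 1) ≤ Real.sqrt (c ^ 2) := Real.sqrt_le_sqrt (by nlinarith)
      _ = c := Real.sqrt_sq hc0.le
  have h2 : ar c ≤ Real.log (2 * c) := by
    apply Real.log_le_log (by nlinarith [Real.sqrt_nonneg (c ^ 2 - 1)])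
    linarith
  have h3 : Real.log (2 * c) = Real.log 2 + Real.log c := Real.log_mul (by norm_num) (by linarith)
  have h4 : Real.log c ≤ c - 1 := by
    have := Real.log_le_sub_one_of_pos hc0; linarith
  have h5 : Real.log 2 ≤ 1 := by
    have := Real.log_two_lt_d9; linarith
  linarith

lemma log_le_ar {c : ℝ} (hc : 1 ≤ c) : Real.log c ≤ ar c :=
  Real.log_le_log (by linarith) (by nlinarith [Real.sqrt_nonneg (c ^ 2 - 1)])

lemma E_le {t c : ℝ} (ht : 0 < t) (hc : 1 ≤ c) :
    Real.exp (-(ar c) ^ 2 / (4 * t)) ≤ Real.exp (49 * t) / c ^ 7 := by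
  have hL : 0 ≤ Real.log c := Real.log_nonneg hc
  have ha := log_le_ar hc
  have h1 : 7 * ar c - 49 * t ≤ ar c ^ 2 / (4 * t) := by
    rw [le_div_iff₀ (by positivity)]
    nlinarith [sq_nonneg (ar c - 14 * t)]
  have key : -(ar c) ^ 2 / (4 * t) ≤ 49 * t - 7 * Real.log c := by
    have : -(ar c) ^ 2 / (4 * t) = -(ar c ^ 2 / (4 * t)) := by ring
    rw [this]; linarith
  calc Real.exp (-(ar c) ^ 2 / (4 * t)) ≤ Real.exp (49 * t - 7 * Real.log c) :=
        Real.exp_le_exp.2 key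
    _ = Real.exp (49 * t) / c ^ 7 := by
        rw [Real.exp_sub]
        congr 1
        rw [show (7 : ℝ) * Real.log c = (7 : ℕ) * Real.log c by norm_num,
          Real.exp_nat_mul, Real.exp_log (by linarith)]

section decay
variable {t b : ℝ}

lemma qmono {b c : ℝ} (hb : 1 < b) (hc : b ≤ c) :
    Real.sqrt (b ^ 2 - 1) ≤ Real.sqrt (c ^ 2 - 1) :=
  Real.sqrt_le_sqrt (by nlinarith)

lemma pow_div_mono {A c : ℝ} (hA : 0 ≤ A) (hc : 1 ≤ c) {m n : ℕ} (h : n ≤ m) :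
    A / c ^ m ≤ A / c ^ n := by
  have hc0 : (0:ℝ) < c := lt_of_lt_of_le one_pos hc
  rw [div_le_div_iff₀ (by positivity) (by positivity)]
  exact mul_le_mul_of_nonneg_left (pow_le_pow_right₀ hc h) hA

lemma phi_decay (ht : 0 < t) (hb : 1 < b) :
    ∃ D, 0 ≤ D ∧ ∀ c, b ≤ c → |phi t c| ≤ D / c ^ 3 := by
  set q₀ := Real.sqrt (b ^ 2 - 1) with hq₀def
  have hq₀ : 0 < q₀ := Real.sqrt_pos.2 (sq1 hb)
  set K := Real.exp (49 * t) with hKdef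
  refine ⟨K / q₀, by positivity, fun c hc => ?_⟩
  have hc1 : 1 < c := lt_of_lt_of_le hb hc
  have hc0 : (0:ℝ) < c := by linarith
  have hq : q₀ ≤ Real.sqrt (c ^ 2 - 1) := qmono hb hc
  have hqc : 0 < Real.sqrt (c ^ 2 - 1) := lt_of_lt_of_le hq₀ hq
  have ha0 : 0 ≤ ar c := ar_nonneg hc1.le
  have ha : ar c ≤ c := ar_le_self hc1.le
  have hE : Real.exp (-(ar c) ^ 2 / (4 * t)) ≤ K / c ^ 7 := E_le ht hc1.le
  have habs : |phi t c| = phi t c :=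
    abs_of_nonneg (mul_nonneg (mul_nonneg ha0 (Real.exp_pos _).le) (by positivity))
  rw [habs]
  have s1 : ar c * Real.exp (-(ar c) ^ 2 / (4 * t)) ≤ c * (K / c ^ 7) :=
    mul_le_mul ha hE (Real.exp_pos _).le hc0.le
  have s2 : (Real.sqrt (c ^ 2 - 1))⁻¹ ≤ q₀⁻¹ := by
    apply inv_anti₀ hq₀ hq
  calc phi t c ≤ (c * (K / c ^ 7)) * q₀⁻¹ :=
        mul_le_mul s1 s2 (by positivity) (by positivity)
    _ = (K / q₀) / c ^ 6 := by field_simp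
    _ ≤ (K / q₀) / c ^ 3 := pow_div_mono (by positivity) hc1.le (by norm_num)

lemma one_sub_bound {t c : ℝ} (ht : 0 < t) (hc1 : 1 < c) (ha : ar c ≤ c) (ha0 : 0 ≤ ar c) :
    |1 - ar c ^ 2 / (2 * t)| ≤ c ^ 2 * (1 + 1 / (2 * t)) := by
  have h1 : |1 - ar c ^ 2 / (2 * t)| ≤ 1 + ar c ^ 2 / (2 * t) := by
    refine (abs_sub 1 _).trans ?_
    rw [abs_one, abs_of_nonneg (by positivity)]
  have h2 : ar c ^ 2 / (2 * t) ≤ c ^ 2 / (2 * t) := by gcongr <;> nlinarith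
  have h3 : (1:ℝ) ≤ c ^ 2 := by nlinarith
  have h4 : c ^ 2 * (1 / (2 * t)) = c ^ 2 / (2 * t) := by ring
  calc |1 - ar c ^ 2 / (2 * t)| ≤ 1 + c ^ 2 / (2 * t) := by linarith
    _ ≤ c ^ 2 * (1 + 1 / (2 * t)) := by rw [mul_add, mul_one]; linarith [h4.ge]

lemma phi1_decay (ht : 0 < t) (hb : 1 < b) :
    ∃ D, 0 ≤ D ∧ ∀ c, b ≤ c → |phi1 t c| ≤ D / c ^ 3 := by
  set q₀ := Real.sqrt (b ^ 2 - 1) with hq₀def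
  have hq₀ : 0 < q₀ := Real.sqrt_pos.2 (sq1 hb)
  set K := Real.exp (49 * t) with hKdef
  set M : ℝ := (1 + 1 / (2 * t)) / q₀ ^ 2 + 1 / q₀ ^ 3 with hMdef
  have hM : 0 ≤ M := by positivity
  refine ⟨K * M, by positivity, fun c hc => ?_⟩
  have hc1 : 1 < c := lt_of_lt_of_le hb hc
  have hc0 : (0:ℝ) < c := by linarith
  have hq : q₀ ≤ Real.sqrt (c ^ 2 - 1) := qmono hb hc
  have hqc : 0 < Real.sqrt (c ^ 2 - 1) := lt_of_lt_of_le hq₀ hq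
  have ha0 : 0 ≤ ar c := ar_nonneg hc1.le
  have ha : ar c ≤ c := ar_le_self hc1.le
  have hE : Real.exp (-(ar c) ^ 2 / (4 * t)) ≤ K / c ^ 7 := E_le ht hc1.le
  have hc2 : (1:ℝ) ≤ c ^ 2 := by nlinarith
  have hB := one_sub_bound ht hc1 ha ha0
  have hS : |(1 - ar c ^ 2 / (2 * t)) / Real.sqrt (c ^ 2 - 1) ^ 2
      - ar c * c / Real.sqrt (c ^ 2 - 1) ^ 3| ≤ c ^ 2 * M := by
    refine (abs_sub _ _).trans ?_
    have hT1 : |(1 - ar c ^ 2 / (2 * t)) / Real.sqrt (c ^ 2 - 1) ^ 2|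
        ≤ c ^ 2 * (1 + 1 / (2 * t)) / q₀ ^ 2 := by
      rw [abs_div, abs_of_pos (show (0:ℝ) < Real.sqrt (c ^ 2 - 1) ^ 2 by positivity)]
      exact div_le_div₀ (by positivity) hB (by positivity) (by gcongr)
    have hT2 : |ar c * c / Real.sqrt (c ^ 2 - 1) ^ 3| ≤ c ^ 2 / q₀ ^ 3 := by
      rw [abs_div, abs_of_pos (show (0:ℝ) < Real.sqrt (c ^ 2 - 1) ^ 3 by positivity),
        abs_of_nonneg (mul_nonneg ha0 hc0.le)]
      refine div_le_div₀ (by positivity) ?_ (by positivity) (by gcongr)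
      nlinarith
    calc |(1 - ar c ^ 2 / (2 * t)) / Real.sqrt (c ^ 2 - 1) ^ 2|
          + |ar c * c / Real.sqrt (c ^ 2 - 1) ^ 3|
        ≤ c ^ 2 * (1 + 1 / (2 * t)) / q₀ ^ 2 + c ^ 2 / q₀ ^ 3 := add_le_add hT1 hT2
      _ = c ^ 2 * M := by rw [hMdef]; ring
  have hmain : |phi1 t c| ≤ (K / c ^ 7) * (c ^ 2 * M) := by
    unfold phi1
    rw [abs_mul, abs_of_pos (Real.exp_pos _)]
    exact mul_le_mul hE hS (abs_nonneg _) (by positivity)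
  calc |phi1 t c| ≤ (K / c ^ 7) * (c ^ 2 * M) := hmain
    _ = (K * M) / c ^ 5 := by field_simp
    _ ≤ (K * M) / c ^ 3 := pow_div_mono (by positivity) hc1.le (by norm_num)
end decay

lemma num_bound {a u c P : ℝ} (ha0 : 0 ≤ a) (hac : a ≤ c) (hu : u ≤ c ^ 2 * P)
    (hu0 : 0 ≤ u) (hc : 1 ≤ c) (hP : 0 ≤ P) : a * u ≤ c ^ 4 * P := by
  have hc0 : (0:ℝ) ≤ c := by linarith
  have h4 : 0 ≤ c ^ 3 * (c - 1) * P :=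
    mul_nonneg (mul_nonneg (pow_nonneg hc0 3) (by linarith)) hP
  calc a * u ≤ c * u := mul_le_mul_of_nonneg_right hac hu0
    _ ≤ c * (c ^ 2 * P) := mul_le_mul_of_nonneg_left hu hc0
    _ = c ^ 3 * P := by ring
    _ ≤ c ^ 4 * P := by nlinarith [h4]

set_option maxHeartbeats 1600000 in
lemma phi2_decay {t b : ℝ} (ht : 0 < t) (hb : 1 < b) :
    ∃ D, 0 ≤ D ∧ ∀ c, b ≤ c → |phi2 t c| ≤ D / c ^ 3 := by
  set q₀ := Real.sqrt (b ^ 2 - 1) with hq₀def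
  have hq₀ : 0 < q₀ := Real.sqrt_pos.2 (sq1 hb)
  set K := Real.exp (49 * t) with hKdef
  set P : ℝ := 1 + 1 / (2 * t) with hPdef
  have hP : 0 ≤ P := by positivity
  set M : ℝ := P / (2 * t * q₀ ^ 3) + 1 / (2 * t * q₀ ^ 4) + 1 / (t * q₀ ^ 3)
      + 2 * P / q₀ ^ 4 + 1 / q₀ ^ 4 + 1 / q₀ ^ 3 + 3 / q₀ ^ 5 with hMdef
  have hM : 0 ≤ M := by positivity
  refine ⟨K * M, by positivity, fun c hc => ?_⟩
  have hc1 : 1 < c := lt_of_lt_of_le hb hc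
  have hc0 : (0:ℝ) < c := by linarith
  have hq : q₀ ≤ Real.sqrt (c ^ 2 - 1) := qmono hb hc
  have hqc : (0:ℝ) < Real.sqrt (c ^ 2 - 1) := lt_of_lt_of_le hq₀ hq
  have ha0 : 0 ≤ ar c := ar_nonneg hc1.le
  have ha : ar c ≤ c := ar_le_self hc1.le
  have hE : Real.exp (-(ar c) ^ 2 / (4 * t)) ≤ K / c ^ 7 := E_le ht hc1.le
  have hc2 : (1:ℝ) ≤ c ^ 2 := by nlinarith
  have hB : |1 - ar c ^ 2 / (2 * t)| ≤ c ^ 2 * P := one_sub_bound ht hc1 ha ha0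
  have h13 : (1:ℝ) ≤ c ^ 3 := by
    have := pow_le_pow_left₀ zero_le_one hc1.le 3
    simpa using this
  have hcc4 : c ≤ c ^ 4 := by
    calc c = c * 1 := by ring
      _ ≤ c * c ^ 3 := mul_le_mul_of_nonneg_left h13 hc0.le
      _ = c ^ 4 := by ring
  have hacc4 : ar c ≤ c ^ 4 := le_trans ha hcc4
  have hc34 : c ^ 3 ≤ c ^ 4 := by
    calc c ^ 3 = c ^ 3 * 1 := by ring
      _ ≤ c ^ 3 * c := mul_le_mul_of_nonneg_left hc1.le (by positivity)
      _ = c ^ 4 := by ring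
  set q := Real.sqrt (c ^ 2 - 1) with hqdef
  set x1 := -(ar c * (1 - ar c ^ 2 / (2 * t))) / (2 * t * q ^ 3) with hx1def
  set x2 := ar c ^ 2 * c / (2 * t * q ^ 4) with hx2def
  set x3 := ar c / (t * q ^ 3) with hx3def
  set x4 := 2 * c * (1 - ar c ^ 2 / (2 * t)) / q ^ 4 with hx4def
  set x5 := c / q ^ 4 with hx5def
  set x6 := ar c / q ^ 3 with hx6def
  set x7 := 3 * ar c * c ^ 2 / q ^ 5 with hx7def
  have hden1 : (0:ℝ) < 2 * t * q ^ 3 := mul_pos (by linarith) (pow_pos hqc 3)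
  have hden2 : (0:ℝ) < 2 * t * q ^ 4 := mul_pos (by linarith) (pow_pos hqc 4)
  have hden3 : (0:ℝ) < t * q ^ 3 := mul_pos ht (pow_pos hqc 3)
  have hqle3 : q₀ ^ 3 ≤ q ^ 3 := pow_le_pow_left₀ hq₀.le hq 3
  have hqle4 : q₀ ^ 4 ≤ q ^ 4 := pow_le_pow_left₀ hq₀.le hq 4
  have hqle5 : q₀ ^ 5 ≤ q ^ 5 := pow_le_pow_left₀ hq₀.le hq 5
  have hx1 : |x1| ≤ c ^ 4 * P / (2 * t * q₀ ^ 3) := by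
    rw [hx1def, abs_div, abs_of_pos hden1, abs_neg, abs_mul, abs_of_nonneg ha0]
    refine div_le_div₀ (by positivity) ?_ (mul_pos (by linarith) (pow_pos hq₀ 3)) ?_
    · exact num_bound ha0 ha hB (abs_nonneg _) hc1.le hP
    · exact mul_le_mul_of_nonneg_left hqle3 (by linarith)
  have hx2 : |x2| ≤ c ^ 4 * 1 / (2 * t * q₀ ^ 4) := by
    rw [hx2def, abs_div, abs_of_pos hden2, abs_of_nonneg (by positivity)]
    refine div_le_div₀ (by positivity) ?_ (mul_pos (by linarith) (pow_pos hq₀ 4)) ?_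
    · have h1 : ar c ^ 2 ≤ c ^ 2 := pow_le_pow_left₀ ha0 ha 2
      calc ar c ^ 2 * c ≤ c ^ 2 * c := mul_le_mul_of_nonneg_right h1 hc0.le
        _ = c ^ 3 := by ring
        _ ≤ c ^ 4 * 1 := by rw [mul_one]; exact hc34
    · exact mul_le_mul_of_nonneg_left hqle4 (by linarith)
  have hx3 : |x3| ≤ c ^ 4 * 1 / (t * q₀ ^ 3) := by
    rw [hx3def, abs_div, abs_of_pos hden3, abs_of_nonneg ha0]
    refine div_le_div₀ (by positivity) (by rw [mul_one]; exact hacc4)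
      (mul_pos ht (pow_pos hq₀ 3)) ?_
    exact mul_le_mul_of_nonneg_left hqle3 ht.le
  have hx4 : |x4| ≤ c ^ 4 * (2 * P) / q₀ ^ 4 := by
    rw [hx4def, abs_div, abs_of_pos (pow_pos hqc 4), abs_mul,
      abs_of_nonneg (by positivity : (0:ℝ) ≤ 2 * c)]
    refine div_le_div₀ (by positivity) ?_ (pow_pos hq₀ 4) hqle4
    calc 2 * c * |1 - ar c ^ 2 / (2 * t)| ≤ 2 * c * (c ^ 2 * P) :=
          mul_le_mul_of_nonneg_left hB (by positivity)
      _ = c ^ 3 * (2 * P) := by ring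
      _ ≤ c ^ 4 * (2 * P) := mul_le_mul_of_nonneg_right hc34 (by positivity)
  have hx5 : |x5| ≤ c ^ 4 * 1 / q₀ ^ 4 := by
    rw [hx5def, abs_div, abs_of_pos (pow_pos hqc 4), abs_of_pos hc0]
    exact div_le_div₀ (by positivity) (by rw [mul_one]; exact hcc4) (pow_pos hq₀ 4) hqle4
  have hx6 : |x6| ≤ c ^ 4 * 1 / q₀ ^ 3 := by
    rw [hx6def, abs_div, abs_of_pos (pow_pos hqc 3), abs_of_nonneg ha0]
    exact div_le_div₀ (by positivity) (by rw [mul_one]; exact hacc4) (pow_pos hq₀ 3) hqle3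
  have hx7 : |x7| ≤ c ^ 4 * 3 / q₀ ^ 5 := by
    rw [hx7def, abs_div, abs_of_pos (pow_pos hqc 5), abs_of_nonneg (by positivity)]
    refine div_le_div₀ (by positivity) ?_ (pow_pos hq₀ 5) hqle5
    calc 3 * ar c * c ^ 2 ≤ 3 * c * c ^ 2 := by
          have := mul_le_mul_of_nonneg_right ha (le_of_lt (pow_pos hc0 2))
          nlinarith [this]
      _ = c ^ 3 * 3 := by ring
      _ ≤ c ^ 4 * 3 := mul_le_mul_of_nonneg_right hc34 (by norm_num)
  have tri : |x1 + x2 - x3 - x4 - x5 - x6 + x7|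
      ≤ |x1| + |x2| + |x3| + |x4| + |x5| + |x6| + |x7| := by
    have l1 := le_abs_self x1; have l1' := neg_abs_le x1
    have l2 := le_abs_self x2; have l2' := neg_abs_le x2
    have l3 := le_abs_self x3; have l3' := neg_abs_le x3
    have l4 := le_abs_self x4; have l4' := neg_abs_le x4
    have l5 := le_abs_self x5; have l5' := neg_abs_le x5
    have l6 := le_abs_self x6; have l6' := neg_abs_le x6
    have l7 := le_abs_self x7; have l7' := neg_abs_le x7
    rw [abs_le]
    constructor <;> linarith
  have hX : |x1 + x2 - x3 - x4 - x5 - x6 + x7| ≤ c ^ 4 * M := by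
    calc |x1 + x2 - x3 - x4 - x5 - x6 + x7|
        ≤ |x1| + |x2| + |x3| + |x4| + |x5| + |x6| + |x7| := tri
      _ ≤ c ^ 4 * P / (2 * t * q₀ ^ 3) + c ^ 4 * 1 / (2 * t * q₀ ^ 4) + c ^ 4 * 1 / (t * q₀ ^ 3)
          + c ^ 4 * (2 * P) / q₀ ^ 4 + c ^ 4 * 1 / q₀ ^ 4 + c ^ 4 * 1 / q₀ ^ 3
          + c ^ 4 * 3 / q₀ ^ 5 := by
          linarith [hx1, hx2, hx3, hx4, hx5, hx6, hx7]
      _ = c ^ 4 * M := by rw [hMdef]; ring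
  have hmain : |phi2 t c| ≤ (K / c ^ 7) * (c ^ 4 * M) := by
    unfold phi2
    rw [← hqdef, ← hx1def, ← hx2def, ← hx3def, ← hx4def, ← hx5def, ← hx6def, ← hx7def,
      abs_mul, abs_of_pos (Real.exp_pos _)]
    exact mul_le_mul hE hX (abs_nonneg _) (by positivity)
  refine hmain.trans (le_of_eq ?_)
  field_simp


lemma contOn_rpow : ContinuousOn (fun u : ℝ => u ^ (-(1:ℝ)/2)) (Ioi 0) := fun u hu =>
  (Real.continuousAt_rpow_const u _ (Or.inl (ne_of_gt hu))).continuousWithinAt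

lemma integrable_bound {b D : ℝ} (hb : 1 < b) (hD : 0 ≤ D) :
    IntegrableOn (fun u : ℝ => D / (b + u) ^ 3 * u ^ (-(1:ℝ)/2)) (Ioi (0:ℝ)) := by
  have hmeas : ∀ s : Set ℝ, s ⊆ Ioi 0 → MeasurableSet s →
      AEStronglyMeasurable (fun u : ℝ => D / (b + u) ^ 3 * u ^ (-(1:ℝ)/2))
        (volume.restrict s) := by
    intro s hs hsm
    have hcont : ContinuousOn (fun u : ℝ => D / (b + u) ^ 3 * u ^ (-(1:ℝ)/2)) (Ioi 0) := by
      refine ContinuousOn.mul ?_ contOn_rpow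
      refine ContinuousOn.div continuousOn_const ?_ ?_
      · exact ((continuous_const.add continuous_id).pow 3).continuousOn
      · intro u hu
        have : (0:ℝ) < b + u := by
          have : (0:ℝ) < u := hu
          linarith
        positivity
    exact (hcont.mono hs).aestronglyMeasurable hsm
  have h1 : IntegrableOn (fun u : ℝ => D / (b + u) ^ 3 * u ^ (-(1:ℝ)/2)) (Ioc 0 1) := by
    have base : IntegrableOn (fun u : ℝ => u ^ (-(1:ℝ)/2)) (Ioc (0:ℝ) 1) :=
      (intervalIntegral.intervalIntegrable_rpow' (by norm_num : (-1:ℝ) < -(1:ℝ)/2)).1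
    refine Integrable.mono' (base.const_mul D) (hmeas _ Ioc_subset_Ioi_self measurableSet_Ioc) ?_
    refine (ae_restrict_iff' measurableSet_Ioc).2 (Filter.Eventually.of_forall fun u hu => ?_)
    have hu0 : (0:ℝ) < u := hu.1
    have hbu : (1:ℝ) ≤ (b + u) ^ 3 := by
      calc (1:ℝ) = 1 ^ 3 := by norm_num
        _ ≤ (b + u) ^ 3 := pow_le_pow_left₀ zero_le_one (by linarith) 3
    have hr : (0:ℝ) ≤ u ^ (-(1:ℝ)/2) := Real.rpow_nonneg hu0.le _
    rw [Real.norm_eq_abs, abs_mul, abs_of_nonneg hr,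
      abs_of_nonneg (by positivity : (0:ℝ) ≤ D / (b + u) ^ 3)]
    have : D / (b + u) ^ 3 ≤ D := by
      rw [div_le_iff₀ (by nlinarith)]; nlinarith
    exact mul_le_mul_of_nonneg_right this hr
  have h2 : IntegrableOn (fun u : ℝ => D / (b + u) ^ 3 * u ^ (-(1:ℝ)/2)) (Ioi 1) := by
    have base : IntegrableOn (fun u : ℝ => u ^ (-3:ℝ)) (Ioi (1:ℝ)) :=
      integrableOn_Ioi_rpow_of_lt (by norm_num) one_pos
    refine Integrable.mono' (base.const_mul D)
      (hmeas _ (fun u hu => mem_Ioi.2 (lt_trans one_pos (mem_Ioi.1 hu))) measurableSet_Ioi) ?_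
    refine (ae_restrict_iff' measurableSet_Ioi).2 (Filter.Eventually.of_forall fun u hu => ?_)
    have hu1 : (1:ℝ) < u := hu
    have hu0 : (0:ℝ) < u := by linarith
    have hr : (0:ℝ) ≤ u ^ (-(1:ℝ)/2) := Real.rpow_nonneg hu0.le _
    rw [Real.norm_eq_abs, abs_mul, abs_of_nonneg hr,
      abs_of_nonneg (by positivity : (0:ℝ) ≤ D / (b + u) ^ 3)]
    have hrle : u ^ (-(1:ℝ)/2) ≤ 1 := by
      rw [show (-(1:ℝ)/2) = -(1/2) by norm_num, Real.rpow_neg hu0.le]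
      rw [inv_le_one_iff₀]
      right
      exact Real.one_le_rpow hu1.le (by norm_num)
    have huc : u ^ (-3:ℝ) = ((u:ℝ) ^ (3:ℕ))⁻¹ := by
      rw [show (-3:ℝ) = -(3:ℕ) by norm_num, Real.rpow_neg hu0.le, Real.rpow_natCast]
    have hd : D / (b + u) ^ 3 ≤ D * u ^ (-3:ℝ) := by
      rw [huc, ← div_eq_mul_inv]
      exact div_le_div₀ hD le_rfl (pow_pos hu0 3) (pow_le_pow_left₀ hu0.le (by linarith) 3)
    calc D / (b + u) ^ 3 * u ^ (-(1:ℝ)/2) ≤ D / (b + u) ^ 3 * 1 :=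
          mul_le_mul_of_nonneg_left hrle (by positivity)
      _ = D / (b + u) ^ 3 := by ring
      _ ≤ D * u ^ (-3:ℝ) := hd
  have := h1.union h2
  rwa [Ioc_union_Ioi_eq_Ioi (zero_le_one)] at this

lemma aesm_integrand {f : ℝ → ℝ} (hf : ContinuousOn f (Ioi 1)) {x : ℝ} (hx : 1 ≤ x) :
    AEStronglyMeasurable (fun u => f (x + u) * u ^ (-(1:ℝ)/2))
      (volume.restrict (Ioi (0:ℝ))) := by
  have hmaps : MapsTo (fun u : ℝ => x + u) (Ioi 0) (Ioi 1) := fun u hu => by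
    have : (0:ℝ) < u := hu
    simp only [mem_Ioi]; linarith
  exact ((hf.comp (continuous_const.add continuous_id).continuousOn hmaps).mul
    contOn_rpow).aestronglyMeasurable measurableSet_Ioi

lemma integrable_integrand {f : ℝ → ℝ} (hf : ContinuousOn f (Ioi 1)) {b x : ℝ}
    (hb : 1 < b) (hx : b ≤ x)
    (hdecay : ∃ D, 0 ≤ D ∧ ∀ c, b ≤ c → |f c| ≤ D / c ^ 3) :
    IntegrableOn (fun u => f (x + u) * u ^ (-(1:ℝ)/2)) (Ioi (0:ℝ)) := by
  obtain ⟨D, hD, hDb⟩ := hdecay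
  refine Integrable.mono' (integrable_bound hb hD) (aesm_integrand hf (by linarith)) ?_
  refine (ae_restrict_iff' measurableSet_Ioi).2 (Filter.Eventually.of_forall fun u hu => ?_)
  have hu0 : (0:ℝ) < u := hu
  have hxu : b ≤ x + u := by linarith
  have hxu0 : (0:ℝ) < x + u := by linarith
  have hr : (0:ℝ) ≤ u ^ (-(1:ℝ)/2) := Real.rpow_nonneg hu0.le _
  rw [Real.norm_eq_abs, abs_mul, abs_of_nonneg hr]
  refine mul_le_mul_of_nonneg_right ((hDb _ hxu).trans ?_) hr
  exact div_le_div₀ hD le_rfl (by positivity)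
    (pow_le_pow_left₀ (by linarith) (by linarith) 3)

lemma hasDerivAt_Ggen {f f' : ℝ → ℝ} (hf : ContinuousOn f (Ioi 1))
    (hf' : ContinuousOn f' (Ioi 1))
    (hd : ∀ c, 1 < c → HasDerivAt f (f' c) c)
    (hdecay : ∀ b, 1 < b → ∃ D, 0 ≤ D ∧ ∀ c, b ≤ c → |f c| ≤ D / c ^ 3)
    (hdecay' : ∀ b, 1 < b → ∃ D, 0 ≤ D ∧ ∀ c, b ≤ c → |f' c| ≤ D / c ^ 3)
    {x : ℝ} (hx : 1 < x) :
    HasDerivAt (fun y => ∫ u in Ioi (0:ℝ), f (y + u) * u ^ (-(1:ℝ)/2))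
      (∫ u in Ioi (0:ℝ), f' (x + u) * u ^ (-(1:ℝ)/2)) x := by
  set b : ℝ := (1 + x) / 2 with hbdef
  have hb : 1 < b := by rw [hbdef]; linarith
  have hbx : b < x := by rw [hbdef]; linarith
  obtain ⟨D, hD, hDb⟩ := hdecay' b hb
  have hε : (0:ℝ) < x - b := by linarith
  refine (hasDerivAt_integral_of_dominated_loc_of_deriv_le (ball_mem_nhds x hε)
    (F := fun y u => f (y + u) * u ^ (-(1:ℝ)/2))
    (F' := fun y u => f' (y + u) * u ^ (-(1:ℝ)/2))
    (bound := fun u => D / (b + u) ^ 3 * u ^ (-(1:ℝ)/2))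
    ?_ ?_ ?_ ?_ ?_ ?_).2
  · filter_upwards [eventually_gt_nhds (show (1:ℝ) < x by linarith)] with y hy
    exact aesm_integrand hf hy.le
  · exact integrable_integrand hf hb hbx.le (hdecay b hb)
  · exact aesm_integrand hf' (by linarith)
  · refine (ae_restrict_iff' measurableSet_Ioi).2 (Filter.Eventually.of_forall fun u hu => ?_)
    intro y hy
    have hu0 : (0:ℝ) < u := hu
    have hyb : b < y := by
      rw [mem_ball, Real.dist_eq] at hy
      have := abs_lt.1 hy
      linarith [this.1]
    have hyu : b ≤ y + u := by linarith
    have hr : (0:ℝ) ≤ u ^ (-(1:ℝ)/2) := Real.rpow_nonneg hu0.le _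
    rw [Real.norm_eq_abs, abs_mul, abs_of_nonneg hr]
    refine mul_le_mul_of_nonneg_right ((hDb _ hyu).trans ?_) hr
    exact div_le_div₀ hD le_rfl (by positivity)
      (pow_le_pow_left₀ (by linarith) (by linarith) 3)
  · exact integrable_bound hb hD
  · refine (ae_restrict_iff' measurableSet_Ioi).2 (Filter.Eventually.of_forall fun u hu => ?_)
    intro y hy
    have hu0 : (0:ℝ) < u := hu
    have hyb : b < y := by
      rw [mem_ball, Real.dist_eq] at hy
      have := abs_lt.1 hy
      linarith [this.1]
    have h1 : HasDerivAt (fun y : ℝ => y + u) 1 y := (hasDerivAt_id y).add_const u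
    have h2 : HasDerivAt f (f' (y + u)) (y + u) := hd _ (by linarith)
    have h3 := (h2.comp y h1).mul_const (u ^ (-(1:ℝ)/2))
    simpa using h3

lemma cosh_image {ρ : ℝ} (hρ : 0 < ρ) : Real.cosh '' Ioi ρ = Ioi (Real.cosh ρ) := by
  ext v
  constructor
  · rintro ⟨s, hs, rfl⟩
    have hs' : ρ < s := hs
    have : Real.cosh ρ < Real.cosh s := by
      rw [Real.cosh_lt_cosh, abs_of_pos hρ, abs_of_pos (by linarith)]
      exact hs'
    exact this
  · intro hv
    have hv' : Real.cosh ρ < v := hv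
    have h1ρ : (1:ℝ) < Real.cosh ρ := Real.one_lt_cosh.2 (ne_of_gt hρ)
    have h1v : (1:ℝ) < v := by linarith
    refine ⟨ar v, ?_, cosh_ar h1v.le⟩
    by_contra h
    rw [mem_Ioi, not_lt] at h
    have : Real.cosh (ar v) ≤ Real.cosh ρ := by
      rw [Real.cosh_le_cosh, abs_of_nonneg (ar_nonneg h1v.le), abs_of_pos hρ]
      exact h
    rw [cosh_ar h1v.le] at this
    linarith

lemma cosh_injOn_s17 {ρ : ℝ} (hρ : 0 < ρ) : InjOn Real.cosh (Ioi ρ) := by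
  intro a ha b hb hab
  by_contra hne
  rcases lt_or_gt_of_ne hne with h | h
  · have : Real.cosh a < Real.cosh b := by
      rw [Real.cosh_lt_cosh, abs_of_pos (lt_trans hρ ha), abs_of_pos (lt_trans hρ hb)]
      exact h
    linarith [this, hab.le]
  · have : Real.cosh b < Real.cosh a := by
      rw [Real.cosh_lt_cosh, abs_of_pos (lt_trans hρ hb), abs_of_pos (lt_trans hρ ha)]
      exact h
    rw [hab] at this
    exact lt_irrefl _ this

lemma cov_s17 (g : ℝ → ℝ) {ρ : ℝ} (hρ : 0 < ρ) :
    (∫ s in Ioi ρ, g (Real.cosh s) * Real.sinh s * (Real.cosh s - Real.cosh ρ) ^ (-(1:ℝ)/2))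
    = ∫ u in Ioi (0:ℝ), g (Real.cosh ρ + u) * u ^ (-(1:ℝ)/2) := by
  set h : ℝ → ℝ := fun v => g v * (v - Real.cosh ρ) ^ (-(1:ℝ)/2) with hhdef
  have stepB : (∫ v in Ioi (Real.cosh ρ), h v) = ∫ s in Ioi ρ,
      g (Real.cosh s) * Real.sinh s * (Real.cosh s - Real.cosh ρ) ^ (-(1:ℝ)/2) := by
    rw [← cosh_image hρ]
    rw [integral_image_eq_integral_abs_deriv_smul measurableSet_Ioi
      (fun s _ => (Real.hasDerivAt_cosh s).hasDerivWithinAt) (cosh_injOn_s17 hρ) h]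
    refine setIntegral_congr_fun measurableSet_Ioi fun s hs => ?_
    have hs0 : 0 < s := lt_trans hρ hs
    simp only [hhdef]
    rw [abs_of_pos (Real.sinh_pos_iff.2 hs0), smul_eq_mul]
    ring
  have stepC : (∫ v in Ioi (Real.cosh ρ), h v)
      = ∫ u in Ioi (0:ℝ), g (Real.cosh ρ + u) * u ^ (-(1:ℝ)/2) := by
    have himg : (fun u : ℝ => Real.cosh ρ + u) '' Ioi (0:ℝ) = Ioi (Real.cosh ρ) := by
      rw [Set.image_const_add_Ioi]
      norm_num
    have hder : ∀ u ∈ Ioi (0:ℝ), HasDerivWithinAt (fun u : ℝ => Real.cosh ρ + u) 1 (Ioi 0) u :=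
      fun u _ => by simpa using ((hasDerivAt_id u).const_add (Real.cosh ρ)).hasDerivWithinAt
    have hinj : InjOn (fun u : ℝ => Real.cosh ρ + u) (Ioi 0) :=
      fun a _ b _ hab => by simpa using hab
    rw [← himg, integral_image_eq_integral_abs_deriv_smul measurableSet_Ioi hder hinj h]
    refine setIntegral_congr_fun measurableSet_Ioi fun u hu => ?_
    simp only [abs_one, one_smul, hhdef, add_sub_cancel_left, smul_eq_mul]
    ring
  rw [← stepB, stepC]


lemma contOn_phi {t : ℝ} (ht : 0 < t) : ContinuousOn (phi t) (Ioi 1) := fun c hc =>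
  (hasDerivAt_phi (ne_of_gt ht) hc).continuousAt.continuousWithinAt

lemma contOn_phi1 {t : ℝ} (ht : 0 < t) : ContinuousOn (phi1 t) (Ioi 1) := fun c hc =>
  (hasDerivAt_phi1 (ne_of_gt ht) hc).continuousAt.continuousWithinAt

lemma contOn_phi2 {t : ℝ} (ht : 0 < t) : ContinuousOn (phi2 t) (Ioi 1) := by
  intro c hc
  have hc1 : (1:ℝ) < c := hc
  have hq : (0:ℝ) < Real.sqrt (c ^ 2 - 1) := Real.sqrt_pos.2 (sq1 hc1)
  have har : ContinuousAt ar c := (hasDerivAt_ar hc1).continuousAt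
  have hqc : ContinuousAt (fun y : ℝ => Real.sqrt (y ^ 2 - 1)) c :=
    (Real.continuous_sqrt.comp ((continuous_pow 2).sub continuous_const)).continuousAt
  have hE : ContinuousAt (fun y : ℝ => Real.exp (-(ar y) ^ 2 / (4 * t))) c :=
    Real.continuous_exp.continuousAt.comp (((har.pow 2).neg).div_const (4 * t))
  have hid : ContinuousAt (fun y : ℝ => y) c := continuousAt_id
  have hone : ContinuousAt (fun y : ℝ => 1 - ar y ^ 2 / (2 * t)) c :=
    continuousAt_const.sub ((har.pow 2).div_const (2 * t))
  have ht2 : (2:ℝ) * t ≠ 0 := by positivity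
  apply ContinuousAt.continuousWithinAt
  unfold phi2
  refine hE.mul ?_
  refine ContinuousAt.add (ContinuousAt.sub (ContinuousAt.sub (ContinuousAt.sub
    (ContinuousAt.sub (ContinuousAt.add ?_ ?_) ?_) ?_) ?_) ?_) ?_
  · exact ((har.mul hone).neg).div (continuousAt_const.mul (hqc.pow 3))
      (by positivity)
  · exact ((har.pow 2).mul hid).div (continuousAt_const.mul (hqc.pow 4)) (by positivity)
  · exact har.div (continuousAt_const.mul (hqc.pow 3)) (by positivity)
  · exact ((continuousAt_const.mul hid).mul hone).div (hqc.pow 4) (by positivity)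
  · exact hid.div (hqc.pow 4) (by positivity)
  · exact har.div (hqc.pow 3) (by positivity)
  · exact ((continuousAt_const.mul har).mul (hid.pow 2)).div (hqc.pow 5) (by positivity)

noncomputable def G0 (t x : ℝ) : ℝ := ∫ u in Ioi (0:ℝ), phi t (x + u) * u ^ (-(1:ℝ)/2)
noncomputable def G1 (t x : ℝ) : ℝ := ∫ u in Ioi (0:ℝ), phi1 t (x + u) * u ^ (-(1:ℝ)/2)
noncomputable def G2 (t x : ℝ) : ℝ := ∫ u in Ioi (0:ℝ), phi2 t (x + u) * u ^ (-(1:ℝ)/2)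

lemma hasDerivAt_G0 {t : ℝ} (ht : 0 < t) {x : ℝ} (hx : 1 < x) :
    HasDerivAt (G0 t) (G1 t x) x := by
  unfold G0 G1
  exact hasDerivAt_Ggen (contOn_phi ht) (contOn_phi1 ht)
    (fun c hc => hasDerivAt_phi (ne_of_gt ht) hc)
    (fun b hb => phi_decay ht hb) (fun b hb => phi1_decay ht hb) hx

lemma hasDerivAt_G1 {t : ℝ} (ht : 0 < t) {x : ℝ} (hx : 1 < x) :
    HasDerivAt (G1 t) (G2 t x) x := by
  unfold G1 G2
  exact hasDerivAt_Ggen (contOn_phi1 ht) (contOn_phi2 ht)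
    (fun c hc => hasDerivAt_phi1 (ne_of_gt ht) hc)
    (fun b hb => phi1_decay ht hb) (fun b hb => phi2_decay ht hb) hx

lemma K3_phi {t : ℝ} (ht : 0 < t) {u : ℝ} (hu : 0 < u) :
    K₃ t u = (4 * π * t) ^ (-(3:ℝ) / 2) * Real.exp (-t) * phi t (Real.cosh u) := by
  have hsinh : (0:ℝ) < Real.sinh u := Real.sinh_pos_iff.2 hu
  have h1 : Real.cosh u ^ 2 - 1 = Real.sinh u ^ 2 := by
    have := Real.cosh_sq u; linarith
  have hexp : Real.exp (-t - u ^ 2 / (4 * t))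
      = Real.exp (-t) * Real.exp (-u ^ 2 / (4 * t)) := by
    rw [← Real.exp_add]; ring_nf
  unfold K₃ phi
  rw [ar_cosh hu.le, h1, Real.sqrt_sq hsinh.le, hexp]
  field_simp

lemma K2_eq {t : ℝ} (ht : 0 < t) {ρ : ℝ} (hρ : 0 < ρ) :
    K₂ t ρ = (Real.exp ((3 / 4) * t) * ((4 * π * t) ^ (-(3:ℝ) / 2) * Real.exp (-t)))
      * G0 t (Real.cosh ρ) := by
  unfold K₂
  have step1 : (∫ s in Set.Ioi ρ,
      Real.exp ((3 / 4) * t) * K₃ t s * Real.sinh s *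
        (Real.cosh s - Real.cosh ρ) ^ (-(1 : ℝ) / 2))
      = ∫ s in Set.Ioi ρ,
        (Real.exp ((3 / 4) * t) * ((4 * π * t) ^ (-(3:ℝ) / 2) * Real.exp (-t))) *
          (phi t (Real.cosh s) * Real.sinh s *
            (Real.cosh s - Real.cosh ρ) ^ (-(1:ℝ) / 2)) := by
    refine setIntegral_congr_fun measurableSet_Ioi fun s hs => ?_
    have hs0 : 0 < s := lt_trans hρ hs
    rw [K3_phi ht hs0]
    ring
  rw [step1, integral_const_mul, cov_s17 (phi t) hρ]
  rfl

lemma deriv_K2 {t : ℝ} (ht : 0 < t) {r : ℝ} (hr : 0 < r) :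
    deriv (fun r' => K₂ t r') r
      = (Real.exp ((3 / 4) * t) * ((4 * π * t) ^ (-(3:ℝ) / 2) * Real.exp (-t)))
        * (G1 t (Real.cosh r) * Real.sinh r) := by
  have heq : (fun r' => K₂ t r') =ᶠ[nhds r]
      (fun r' => (Real.exp ((3 / 4) * t) * ((4 * π * t) ^ (-(3:ℝ) / 2) * Real.exp (-t)))
        * G0 t (Real.cosh r')) := by
    filter_upwards [Ioi_mem_nhds hr] with y hy
    exact K2_eq ht hy
  rw [heq.deriv_eq]
  have h1 : 1 < Real.cosh r := Real.one_lt_cosh.2 (ne_of_gt hr)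
  exact (((hasDerivAt_G0 ht h1).comp r (Real.hasDerivAt_cosh r)).const_mul _).deriv

lemma deriv2_K2 {t : ℝ} (ht : 0 < t) {ρ : ℝ} (hρ : 0 < ρ) :
    deriv (deriv (fun r' => K₂ t r')) ρ
      = (Real.exp ((3 / 4) * t) * ((4 * π * t) ^ (-(3:ℝ) / 2) * Real.exp (-t)))
        * (G2 t (Real.cosh ρ) * Real.sinh ρ * Real.sinh ρ
            + G1 t (Real.cosh ρ) * Real.cosh ρ) := by
  have heq : deriv (fun r' => K₂ t r') =ᶠ[nhds ρ]
      (fun r' => (Real.exp ((3 / 4) * t) * ((4 * π * t) ^ (-(3:ℝ) / 2) * Real.exp (-t)))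
        * (G1 t (Real.cosh r') * Real.sinh r')) := by
    filter_upwards [Ioi_mem_nhds hρ] with y hy
    exact deriv_K2 ht hy
  rw [heq.deriv_eq]
  have h1 : 1 < Real.cosh ρ := Real.one_lt_cosh.2 (ne_of_gt hρ)
  have hd : HasDerivAt (fun r' : ℝ => G1 t (Real.cosh r') * Real.sinh r')
      (G2 t (Real.cosh ρ) * Real.sinh ρ * Real.sinh ρ
        + G1 t (Real.cosh ρ) * Real.cosh ρ) ρ :=
    (((hasDerivAt_G1 ht h1).comp ρ (Real.hasDerivAt_cosh ρ)).mul (Real.hasDerivAt_sinh ρ))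
  exact (hd.const_mul _).deriv

lemma deriv_K3 {t : ℝ} (ht : 0 < t) {s : ℝ} (hs : 0 < s) :
    deriv (fun u => K₃ t u) s
      = ((4 * π * t) ^ (-(3:ℝ) / 2) * Real.exp (-t))
        * (phi1 t (Real.cosh s) * Real.sinh s) := by
  have heq : (fun u => K₃ t u) =ᶠ[nhds s]
      (fun u => (4 * π * t) ^ (-(3:ℝ) / 2) * Real.exp (-t) * phi t (Real.cosh u)) := by
    filter_upwards [Ioi_mem_nhds hs] with y hy
    exact K3_phi ht hy
  rw [heq.deriv_eq]
  have h1 : 1 < Real.cosh s := Real.one_lt_cosh.2 (ne_of_gt hs)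
  exact (((hasDerivAt_phi (ne_of_gt ht) h1).comp s (Real.hasDerivAt_cosh s)).const_mul _).deriv

lemma deriv2_K3 {t : ℝ} (ht : 0 < t) {s : ℝ} (hs : 0 < s) :
    deriv (deriv (fun u => K₃ t u)) s
      = ((4 * π * t) ^ (-(3:ℝ) / 2) * Real.exp (-t))
        * (phi2 t (Real.cosh s) * Real.sinh s * Real.sinh s
            + phi1 t (Real.cosh s) * Real.cosh s) := by
  have heq : deriv (fun u => K₃ t u) =ᶠ[nhds s]
      (fun u => ((4 * π * t) ^ (-(3:ℝ) / 2) * Real.exp (-t))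
        * (phi1 t (Real.cosh u) * Real.sinh u)) := by
    filter_upwards [Ioi_mem_nhds hs] with y hy
    exact deriv_K3 ht hy
  rw [heq.deriv_eq]
  have h1 : 1 < Real.cosh s := Real.one_lt_cosh.2 (ne_of_gt hs)
  have hd : HasDerivAt (fun u : ℝ => phi1 t (Real.cosh u) * Real.sinh u)
      (phi2 t (Real.cosh s) * Real.sinh s * Real.sinh s
        + phi1 t (Real.cosh s) * Real.cosh s) s :=
    (((hasDerivAt_phi1 (ne_of_gt ht) h1).comp s (Real.hasDerivAt_cosh s)).mul
      (Real.hasDerivAt_sinh s))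
  exact (hd.const_mul _).deriv

theorem stmt_17 (t : ℝ) (ht : 0 < t) (ρ : ℝ) (hρ : 0 < ρ) :
    deriv (deriv (fun r => K₂ t r)) ρ -
        (Real.cosh ρ / Real.sinh ρ) * deriv (fun r => K₂ t r) ρ =
      ∫ s in Set.Ioi ρ,
        Real.exp ((3 / 4) * t) *
          (deriv (deriv (fun u => K₃ t u)) s -
            (Real.cosh s / Real.sinh s) * deriv (fun u => K₃ t u) s) *
          ((Real.sinh ρ) ^ 2 / Real.sinh s) *
          (Real.cosh s - Real.cosh ρ) ^ (-(1 : ℝ) / 2) := by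
  set C : ℝ := Real.exp ((3 / 4) * t) * ((4 * π * t) ^ (-(3:ℝ) / 2) * Real.exp (-t)) with hC
  have hsinhρ : (0:ℝ) < Real.sinh ρ := Real.sinh_pos_iff.2 hρ
  have hrhs : (∫ s in Set.Ioi ρ,
        Real.exp ((3 / 4) * t) *
          (deriv (deriv (fun u => K₃ t u)) s -
            (Real.cosh s / Real.sinh s) * deriv (fun u => K₃ t u) s) *
          ((Real.sinh ρ) ^ 2 / Real.sinh s) *
          (Real.cosh s - Real.cosh ρ) ^ (-(1 : ℝ) / 2))
      = ∫ s in Set.Ioi ρ, (C * Real.sinh ρ ^ 2) *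
          (phi2 t (Real.cosh s) * Real.sinh s *
            (Real.cosh s - Real.cosh ρ) ^ (-(1:ℝ) / 2)) := by
    refine setIntegral_congr_fun measurableSet_Ioi fun s hs => ?_
    have hs0 : 0 < s := lt_trans hρ hs
    have hsinh : (0:ℝ) < Real.sinh s := Real.sinh_pos_iff.2 hs0
    rw [deriv2_K3 ht hs0, deriv_K3 ht hs0, hC]
    field_simp
    ring
  rw [hrhs, integral_const_mul, cov_s17 (phi2 t) hρ]
  have hG2 : (∫ u in Ioi (0:ℝ), phi2 t (Real.cosh ρ + u) * u ^ (-(1:ℝ)/2))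
      = G2 t (Real.cosh ρ) := rfl
  rw [hG2, deriv2_K2 ht hρ, deriv_K2 ht hρ, ← hC]
  field_simp
  ring
end derivs
end
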